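/- arXiv:1612.06278 — 6 statements merged into one kernel-verified Lean document; each statement's English description precedes it below -/
import Mathlib

section
/- Let Γ be a vacuum solution of the Bianchi class B system. Then every α-limit point of Γ lies in K ∪ P_κ. Moreover, if Γ has an α-limit point lying in P_κ, then Γ is a constant solution. -/
open Real Filter Topology MeasureTheory

noncomputable def NT (κ : ℝ) (Ap Np : ℝ → ℝ) (τ : ℝ) : ℝ :=
  (1/3) * ((Np τ)^2 - κ * Ap τ)

noncomputable def qF (γ κ : ℝ) (Sp St Ap Np : ℝ → ℝ) (τ : ℝ) : ℝ :=
  (3/2)*(2-γ)*((Sp τ)^2 + St τ) + (1/2)*(3*γ-2)*(1 - Ap τ - NT κ Ap Np τ)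

noncomputable def OmF (κ : ℝ) (Sp St Ap Np : ℝ → ℝ) (τ : ℝ) : ℝ :=
  1 - (Sp τ)^2 - St τ - Ap τ - NT κ Ap Np τ

/-- A solution of the Bianchi class B system in expansion-normalised variables. -/
structure BianchiB (γ κ : ℝ) (Sp St Dl Ap Np : ℝ → ℝ) : Prop where
  hγ : γ ∈ Set.Icc (0:ℝ) 2
  diff_Sp : Differentiable ℝ Sp
  diff_St : Differentiable ℝ St
  diff_Dl : Differentiable ℝ Dl
  diff_Ap : Differentiable ℝ Ap
  diff_Np : Differentiable ℝ Np
  ev_Sp : ∀ τ, deriv Sp τ = (qF γ κ Sp St Ap Np τ - 2) * Sp τ - 2 * NT κ Ap Np τ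
  ev_St : ∀ τ, deriv St τ =
    2*(qF γ κ Sp St Ap Np τ - 2) * St τ - 4 * Sp τ * Ap τ - 4 * Dl τ * Np τ
  ev_Dl : ∀ τ, deriv Dl τ =
    2*(qF γ κ Sp St Ap Np τ + Sp τ - 1) * Dl τ + 2*(St τ - NT κ Ap Np τ) * Np τ
  ev_Ap : ∀ τ, deriv Ap τ = 2*(qF γ κ Sp St Ap Np τ + 2*Sp τ) * Ap τ
  ev_Np : ∀ τ, deriv Np τ = (qF γ κ Sp St Ap Np τ + 2*Sp τ) * Np τ + 6 * Dl τ
  con_main : ∀ τ, St τ * NT κ Ap Np τ - (Dl τ)^2 - (Sp τ)^2 * Ap τ = 0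
  con_St : ∀ τ, 0 ≤ St τ
  con_Ap : ∀ τ, 0 ≤ Ap τ
  con_NT : ∀ τ, 0 ≤ NT κ Ap Np τ
  con_sum : ∀ τ, (Sp τ)^2 + St τ + Ap τ + NT κ Ap Np τ ≤ 1

def Vacuum (κ : ℝ) (Sp St Ap Np : ℝ → ℝ) : Prop :=
  ∀ τ, OmF κ Sp St Ap Np τ = 0

def Inflationary (γ κ : ℝ) (Sp St Ap Np : ℝ → ℝ) : Prop :=
  (∀ τ, 0 < OmF κ Sp St Ap Np τ) ∧ γ ∈ Set.Ico (0:ℝ) (2/3)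

def traj (Sp St Dl Ap Np : ℝ → ℝ) (τ : ℝ) : ℝ × ℝ × ℝ × ℝ × ℝ :=
  (Sp τ, St τ, Dl τ, Ap τ, Np τ)

def AlphaLimitPt (Sp St Dl Ap Np : ℝ → ℝ) (p : ℝ × ℝ × ℝ × ℝ × ℝ) : Prop :=
  ∃ t : ℕ → ℝ, Tendsto t atTop atBot ∧
    Tendsto (fun n => traj Sp St Dl Ap Np (t n)) atTop (𝓝 p)

def Kasner : Set (ℝ × ℝ × ℝ × ℝ × ℝ) :=
  {p | ∃ s, s ∈ Set.Icc (-1:ℝ) 1 ∧ p = (s, 1 - s^2, 0, 0, 0)}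

def PlaneWave (κ : ℝ) : Set (ℝ × ℝ × ℝ × ℝ × ℝ) :=
  {p | ∃ s n : ℝ, -1 < s ∧ n^2 = (1+s)*(κ*(1+s) - 3*s) ∧ p = (s, -s*(1+s), 0, (1+s)^2, n)}

def IsConstSol (Sp St Dl Ap Np : ℝ → ℝ) : Prop :=
  ∀ τ, traj Sp St Dl Ap Np τ = traj Sp St Dl Ap Np 0

/-- `BigO f a` : `f = O(e^{a τ})` as `τ → −∞`. -/
def BigO (f : ℝ → ℝ) (a : ℝ) : Prop :=
  ∃ C > 0, ∃ τ₀ : ℝ, ∀ τ ≤ τ₀, |f τ| ≤ C * Real.exp (a * τ)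

open scoped Classical in
noncomputable def PiVal (γ s : ℝ) (vac : Prop) : ℝ :=
  if vac then 4 + 4*s else min (6 - 3*γ) (4 + 4*s)

open scoped Classical in
noncomputable def PiBarVal (γ s : ℝ) (vac : Prop) : ℝ :=
  if vac then 4 + 4*s - 4*Real.sqrt (3*(1-s^2))
  else min (6 - 3*γ) (4 + 4*s - 4*Real.sqrt (3*(1-s^2)))


namespace BBaux


/-- `B ≥ 0` on the constraint set. -/
lemma B_nonneg_pt (s t d a nt : ℝ) (ht : 0 ≤ t) (ha : 0 ≤ a) (hnt : 0 ≤ nt)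
    (hcon : t * nt - d^2 - s^2*a = 0) :
    0 ≤ a*(2*s*(1+s) + t) + nt*(1+s)^2 := by
  rcases eq_or_lt_of_le ht with h0 | hpos
  · have hd2 : d^2 + s^2*a = 0 := by nlinarith [hcon]
    have hs2a : s^2*a = 0 := by nlinarith [sq_nonneg d, mul_nonneg (sq_nonneg s) ha]
    have hsa : s*a = 0 := by
      have h1 : (s*a)^2 = (s^2*a)*a := by ring
      nlinarith [sq_nonneg (s*a)]
    nlinarith [mul_nonneg hnt (sq_nonneg (1+s))]
  · have key : t * (a*(2*s*(1+s) + t) + nt*(1+s)^2)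
        = a*(t + s*(1+s))^2 + d^2*(1+s)^2 := by linear_combination (1+s)^2 * hcon
    by_contra hneg
    push_neg at hneg
    nlinarith [mul_nonneg ha (sq_nonneg (t + s*(1+s))),
      mul_nonneg (sq_nonneg d) (sq_nonneg (1+s)), mul_pos hpos (neg_pos.mpr hneg)]

/-- Claim A : `a ≤ (1+s)²` on the constraint set. -/
lemma claimA_pt (s t d a nt : ℝ) (ht : 0 ≤ t) (ha : 0 ≤ a) (hnt : 0 ≤ nt)
    (hcon : t * nt - d^2 - s^2*a = 0) (hsum : s^2 + t + a + nt = 1) :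
    a ≤ (1+s)^2 := by
  have h1 : (a - (1-s)^2) * (a - (1+s)^2) ≥ 0 := by
    nlinarith [sq_nonneg (t - nt), sq_nonneg d]
  by_contra hlt
  push_neg at hlt
  have ha1 : a ≤ 1 - s^2 := by linarith
  nlinarith [h1, hlt, ha1]



set_option maxHeartbeats 2000000 in
lemma charE_pt (κ s t d a n : ℝ) (ht : 0 ≤ t) (ha : 0 ≤ a)
    (hnt : 0 ≤ (1/3) * (n^2 - κ*a))
    (hsum : s^2 + t + a + (1/3) * (n^2 - κ*a) = 1)
    (hcon : t * ((1/3) * (n^2 - κ*a)) - d^2 - s^2*a = 0)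
    (hB : a*(2*s*(1+s) + t) + ((1/3) * (n^2 - κ*a))*(1+s)^2 = 0) :
    ((s,t,d,a,n) : ℝ × ℝ × ℝ × ℝ × ℝ) ∈ Kasner ∪ PlaneWave κ := by
  set nt : ℝ := (1/3) * (n^2 - κ*a) with hntdef
  have hn2 : n^2 = 3*nt + κ*a := by rw [hntdef]; ring
  rcases eq_or_lt_of_le ha with ha0 | hapos
  · -- a = 0
    have ha0' : a = 0 := ha0.symm
    subst ha0'
    have hB' : nt*(1+s)^2 = 0 := by linarith [hB]
    rcases mul_eq_zero.mp hB' with hnt0 | hs1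
    · -- nt = 0
      have hn0 : n = 0 := by
        have : n^2 = 0 := by rw [hn2, hnt0]; ring
        exact pow_eq_zero_iff (n := 2) (by norm_num) |>.mp this
      have hd0 : d = 0 := by
        have : d^2 = 0 := by nlinarith [hcon, hnt0]
        exact pow_eq_zero_iff (n := 2) (by norm_num) |>.mp this
      have hts : t = 1 - s^2 := by rw [hnt0] at hsum; linarith
      left
      refine ⟨s, ⟨?_, ?_⟩, by rw [hts, hd0, hn0]⟩
      · nlinarith [ht, hts]
      · nlinarith [ht, hts]
    · -- (1+s)^2 = 0
      have hs : s = -1 := by nlinarith [hs1]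
      subst hs
      have htnt : t + nt = 0 := by nlinarith [hsum]
      have ht0 : t = 0 := by linarith
      have hnt0 : nt = 0 := by linarith
      have hn0 : n = 0 := by
        have : n^2 = 0 := by rw [hn2, hnt0]; ring
        exact pow_eq_zero_iff (n := 2) (by norm_num) |>.mp this
      have hd0 : d = 0 := by
        have : d^2 = 0 := by nlinarith [hcon, hnt0, ht0]
        exact pow_eq_zero_iff (n := 2) (by norm_num) |>.mp this
      left
      exact ⟨-1, ⟨le_refl _, by norm_num⟩, by rw [ht0, hd0, hn0]; norm_num⟩
  · -- a > 0
    rcases eq_or_lt_of_le ht with ht0 | htpos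
    · -- t = 0
      have ht0' : t = 0 := ht0.symm
      subst ht0'
      have hds : d^2 + s^2*a = 0 := by nlinarith [hcon]
      have hd0 : d = 0 := by
        have : d^2 = 0 := by nlinarith [sq_nonneg d, mul_nonneg (sq_nonneg s) ha]
        exact pow_eq_zero_iff (n := 2) (by norm_num) |>.mp this
      have hs0 : s = 0 := by
        have h1 : s^2*a = 0 := by nlinarith [sq_nonneg d]
        have h2 : s^2 = 0 := by
          rcases mul_eq_zero.mp h1 with h | h
          · exact h
          · exact absurd h (ne_of_gt hapos)
        exact pow_eq_zero_iff (n := 2) (by norm_num) |>.mp h2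
      subst hs0
      have hnt0 : nt = 0 := by nlinarith [hB]
      have ha1 : a = 1 := by nlinarith [hsum, hnt0]
      right
      refine ⟨0, n, by norm_num, ?_, ?_⟩
      · rw [hn2, hnt0, ha1]; ring
      · rw [hd0, ha1]; norm_num
    · -- t > 0
      have key : t * (a*(2*s*(1+s) + t) + nt*(1+s)^2)
          = a*(t + s*(1+s))^2 + d^2*(1+s)^2 := by linear_combination (1+s)^2 * hcon
      have hzero : a*(t + s*(1+s))^2 + d^2*(1+s)^2 = 0 := by rw [← key, hB]; ring
      have hw0 : t + s*(1+s) = 0 := by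
        have hterm1 : 0 ≤ a*(t + s*(1+s))^2 := mul_nonneg ha (sq_nonneg _)
        have hterm2 : 0 ≤ d^2*(1+s)^2 := mul_nonneg (sq_nonneg d) (sq_nonneg _)
        have h1 : a*(t + s*(1+s))^2 = 0 := le_antisymm (by linarith [hzero]) hterm1
        have h2 : (t + s*(1+s))^2 = 0 := by
          rcases mul_eq_zero.mp h1 with h | h
          · exact absurd h (ne_of_gt hapos)
          · exact h
        exact pow_eq_zero_iff (n := 2) (by norm_num) |>.mp h2
      have hsneg : s*(1+s) < 0 := by linarith [hw0, htpos]
      have hsrange : -1 < s ∧ s < 0 := by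
        constructor
        · by_contra hc
          push_neg at hc
          have h1 : (1+s) ≤ 0 := by linarith
          have h2 : s ≤ 0 := by linarith
          nlinarith [mul_nonneg (neg_nonneg.mpr h2) (neg_nonneg.mpr h1)]
        · by_contra hc
          push_neg at hc
          have h1 : (0:ℝ) ≤ 1+s := by linarith
          exact absurd (mul_nonneg hc h1) (not_le.mpr hsneg)
      have hd0 : d = 0 := by
        have hterm1 : 0 ≤ a*(t + s*(1+s))^2 := mul_nonneg ha (sq_nonneg _)
        have hterm2 : 0 ≤ d^2*(1+s)^2 := mul_nonneg (sq_nonneg d) (sq_nonneg _)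
        have h1 : d^2*(1+s)^2 = 0 := le_antisymm (by linarith [hzero]) hterm2
        have h2 : d^2 = 0 := by
          rcases mul_eq_zero.mp h1 with h | h
          · exact h
          · exfalso
            have hs1 : (0:ℝ) < 1+s := by linarith [hsrange.1]
            nlinarith [h, hs1]
        exact pow_eq_zero_iff (n := 2) (by norm_num) |>.mp h2
      -- t = -s(1+s), a + nt = 1+s, (1+s) nt = -s a  ⇒  a = (1+s)^2
      have hts : t = -s*(1+s) := by linarith [hw0]
      have hant : a + nt = 1 + s := by nlinarith [hsum, hts]
      have hnta : (1+s)*nt = -s*a := by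
        have hs0 : s ≠ 0 := ne_of_lt hsrange.2
        have h1 : t*nt = s^2*a := by nlinarith [hcon, hd0]
        have h2 : s*((1+s)*nt) = s*(-s*a) := by nlinarith [h1, hts]
        exact mul_left_cancel₀ hs0 h2
      have haa : a = (1+s)^2 := by nlinarith [hant, hnta]
      right
      refine ⟨s, n, hsrange.1, ?_, ?_⟩
      · rw [hn2]; nlinarith [hant, haa]
      · rw [hts, hd0, haa]

/-- On vacuum solutions the deceleration parameter is `2(Σ₊²+Σ̃)`. -/
lemma q_eq {γ κ : ℝ} {Sp St Ap Np : ℝ → ℝ}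
    (hvac : Vacuum κ Sp St Ap Np) (τ : ℝ) :
    qF γ κ Sp St Ap Np τ = 2 * ((Sp τ)^2 + St τ) := by
  have h := hvac τ
  simp only [OmF, NT] at h
  simp only [qF, NT]
  linear_combination ((3*γ-2)/2) * h

section SolBounds

variable {γ κ : ℝ} {Sp St Dl Ap Np : ℝ → ℝ}
  (hsol : BianchiB γ κ Sp St Dl Ap Np) (hvac : Vacuum κ Sp St Ap Np)

include hsol

lemma S_sq_le (τ : ℝ) : (Sp τ)^2 ≤ 1 := by
  linarith [hsol.con_St τ, hsol.con_Ap τ, hsol.con_NT τ, hsol.con_sum τ]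

lemma S_abs_le (τ : ℝ) : |Sp τ| ≤ 1 :=
  (sq_le_one_iff_abs_le_one (Sp τ)).mp (S_sq_le hsol τ)

lemma T_le (τ : ℝ) : St τ ≤ 1 := by
  linarith [sq_nonneg (Sp τ), hsol.con_Ap τ, hsol.con_NT τ, hsol.con_sum τ]

lemma A_le (τ : ℝ) : Ap τ ≤ 1 := by
  linarith [sq_nonneg (Sp τ), hsol.con_St τ, hsol.con_NT τ, hsol.con_sum τ]

lemma NT_le (τ : ℝ) : NT κ Ap Np τ ≤ 1 := by
  linarith [sq_nonneg (Sp τ), hsol.con_St τ, hsol.con_Ap τ, hsol.con_sum τ]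

lemma D_sq_le (τ : ℝ) : (Dl τ)^2 ≤ 1 := by
  have h := hsol.con_main τ
  nlinarith [hsol.con_St τ, hsol.con_NT τ, T_le hsol τ, NT_le hsol τ,
    mul_nonneg (sq_nonneg (Sp τ)) (hsol.con_Ap τ)]

lemma D_abs_le (τ : ℝ) : |Dl τ| ≤ 1 :=
  (sq_le_one_iff_abs_le_one (Dl τ)).mp (D_sq_le hsol τ)

lemma N_abs_le (τ : ℝ) : |Np τ| ≤ 2 + |κ| := by
  have h1 : (Np τ)^2 = 3 * NT κ Ap Np τ + κ * Ap τ := by simp only [NT]; ring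
  have h2 : κ * Ap τ ≤ |κ| := by
    calc κ * Ap τ ≤ |κ * Ap τ| := le_abs_self _
    _ = |κ| * |Ap τ| := abs_mul _ _
    _ ≤ |κ| * 1 := by
        gcongr
        rw [abs_of_nonneg (hsol.con_Ap τ)]; exact A_le hsol τ
    _ = |κ| := mul_one _
  have h3 : (Np τ)^2 ≤ (2 + |κ|)^2 := by
    rw [h1]
    nlinarith [NT_le hsol τ, abs_nonneg κ, sq_nonneg κ, sq_abs κ]
  have h4 : (0:ℝ) ≤ 2 + |κ| := by positivity
  exact (abs_le_of_sq_le_sq' h3 h4).2.trans_eq rfl |>.trans_eq rfl |> fun h => abs_le.mpr ⟨(abs_le_of_sq_le_sq' h3 h4).1, h⟩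

include hvac in
lemma q_bounds (τ : ℝ) : 0 ≤ qF γ κ Sp St Ap Np τ ∧ qF γ κ Sp St Ap Np τ ≤ 2 := by
  rw [q_eq hvac τ]
  constructor
  · nlinarith [sq_nonneg (Sp τ), hsol.con_St τ]
  · nlinarith [S_sq_le hsol τ, T_le hsol τ, hsol.con_Ap τ, hsol.con_NT τ, hsol.con_sum τ]

include hvac in
lemma deriv_Sp_bound (τ : ℝ) : |deriv Sp τ| ≤ 20 + 4*|κ| := by
  rw [hsol.ev_Sp τ]
  obtain ⟨hq0, hq2⟩ := q_bounds hsol hvac τ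
  have hS := abs_le.mp (S_abs_le hsol τ)
  have hN0 := hsol.con_NT τ
  have hN1 := NT_le hsol τ
  rw [abs_le]
  constructor <;> nlinarith [mul_nonneg (sub_nonneg.mpr hq2) (sub_nonneg.mpr hS.2),
    mul_nonneg (sub_nonneg.mpr hq2) (by linarith [hS.1] : (0:ℝ) ≤ 1 + Sp τ),
    abs_nonneg κ]

include hvac in
lemma deriv_St_bound (τ : ℝ) : |deriv St τ| ≤ 20 + 4*|κ| := by
  rw [hsol.ev_St τ]
  obtain ⟨hq0, hq2⟩ := q_bounds hsol hvac τ
  have hS := abs_le.mp (S_abs_le hsol τ)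
  have hD := abs_le.mp (D_abs_le hsol τ)
  have hN := abs_le.mp (N_abs_le hsol τ)
  have hT0 := hsol.con_St τ
  have hT1 := T_le hsol τ
  have hA0 := hsol.con_Ap τ
  have hA1 := A_le hsol τ
  rw [abs_le]
  constructor <;>
    nlinarith [mul_nonneg (sub_nonneg.mpr hq2) (sub_nonneg.mpr hT1),
      mul_nonneg (sub_nonneg.mpr hq2) hT0,
      mul_nonneg (sub_nonneg.mpr hS.2) hA0,
      mul_nonneg (by linarith [hS.1] : (0:ℝ) ≤ 1 + Sp τ) hA0,
      mul_nonneg (sub_nonneg.mpr hD.2) (sub_nonneg.mpr hN.2),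
      mul_nonneg (sub_nonneg.mpr hD.2) (by linarith [hN.1] : (0:ℝ) ≤ 2 + |κ| + Np τ),
      mul_nonneg (by linarith [hD.1] : (0:ℝ) ≤ 1 + Dl τ) (sub_nonneg.mpr hN.2),
      mul_nonneg (by linarith [hD.1] : (0:ℝ) ≤ 1 + Dl τ)
        (by linarith [hN.1] : (0:ℝ) ≤ 2 + |κ| + Np τ), abs_nonneg κ]

include hvac in
lemma deriv_Dl_bound (τ : ℝ) : |deriv Dl τ| ≤ 20 + 4*|κ| := by
  rw [hsol.ev_Dl τ]
  obtain ⟨hq0, hq2⟩ := q_bounds hsol hvac τ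
  have hS := abs_le.mp (S_abs_le hsol τ)
  have hD := abs_le.mp (D_abs_le hsol τ)
  have hN := abs_le.mp (N_abs_le hsol τ)
  have hT0 := hsol.con_St τ
  have hT1 := T_le hsol τ
  have hNt0 := hsol.con_NT τ
  have hNt1 := NT_le hsol τ
  rw [abs_le]
  constructor <;>
    nlinarith [mul_nonneg (sub_nonneg.mpr hD.2) (sub_nonneg.mpr hq2),
      mul_nonneg (sub_nonneg.mpr hD.2) hq0,
      mul_nonneg (by linarith [hD.1] : (0:ℝ) ≤ 1 + Dl τ) (sub_nonneg.mpr hq2),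
      mul_nonneg (by linarith [hD.1] : (0:ℝ) ≤ 1 + Dl τ) hq0,
      mul_nonneg (sub_nonneg.mpr hD.2) (sub_nonneg.mpr hS.2),
      mul_nonneg (sub_nonneg.mpr hD.2) (by linarith [hS.1] : (0:ℝ) ≤ 1 + Sp τ),
      mul_nonneg (by linarith [hD.1] : (0:ℝ) ≤ 1 + Dl τ) (sub_nonneg.mpr hS.2),
      mul_nonneg (by linarith [hD.1] : (0:ℝ) ≤ 1 + Dl τ)
        (by linarith [hS.1] : (0:ℝ) ≤ 1 + Sp τ),
      mul_nonneg (by linarith [hT0, hNt1] : (0:ℝ) ≤ St τ - NT κ Ap Np τ + 1)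
        (sub_nonneg.mpr hN.2),
      mul_nonneg (by linarith [hT0, hNt1] : (0:ℝ) ≤ St τ - NT κ Ap Np τ + 1)
        (by linarith [hN.1] : (0:ℝ) ≤ 2 + |κ| + Np τ),
      mul_nonneg (by linarith [hT1, hNt0] : (0:ℝ) ≤ 1 - (St τ - NT κ Ap Np τ))
        (sub_nonneg.mpr hN.2),
      mul_nonneg (by linarith [hT1, hNt0] : (0:ℝ) ≤ 1 - (St τ - NT κ Ap Np τ))
        (by linarith [hN.1] : (0:ℝ) ≤ 2 + |κ| + Np τ), abs_nonneg κ]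

include hvac in
lemma deriv_Ap_bound (τ : ℝ) : |deriv Ap τ| ≤ 20 + 4*|κ| := by
  rw [hsol.ev_Ap τ]
  obtain ⟨hq0, hq2⟩ := q_bounds hsol hvac τ
  have hS := abs_le.mp (S_abs_le hsol τ)
  have hA0 := hsol.con_Ap τ
  have hA1 := A_le hsol τ
  rw [abs_le]
  constructor <;>
    nlinarith [mul_nonneg (sub_nonneg.mpr hq2) hA0, mul_nonneg hq0 hA0,
      mul_nonneg (sub_nonneg.mpr hS.2) hA0,
      mul_nonneg (by linarith [hS.1] : (0:ℝ) ≤ 1 + Sp τ) hA0,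
      mul_nonneg (sub_nonneg.mpr hq2) (sub_nonneg.mpr hA1),
      mul_nonneg hq0 (sub_nonneg.mpr hA1), abs_nonneg κ]

include hvac in
lemma deriv_Np_bound (τ : ℝ) : |deriv Np τ| ≤ 20 + 4*|κ| := by
  rw [hsol.ev_Np τ]
  obtain ⟨hq0, hq2⟩ := q_bounds hsol hvac τ
  have hS := abs_le.mp (S_abs_le hsol τ)
  have hD := abs_le.mp (D_abs_le hsol τ)
  have hN := abs_le.mp (N_abs_le hsol τ)
  rw [abs_le]
  constructor <;>
    nlinarith [mul_nonneg (sub_nonneg.mpr hq2) (sub_nonneg.mpr hN.2),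
      mul_nonneg (sub_nonneg.mpr hq2) (by linarith [hN.1] : (0:ℝ) ≤ 2 + |κ| + Np τ),
      mul_nonneg hq0 (sub_nonneg.mpr hN.2),
      mul_nonneg hq0 (by linarith [hN.1] : (0:ℝ) ≤ 2 + |κ| + Np τ),
      mul_nonneg (sub_nonneg.mpr hS.2) (sub_nonneg.mpr hN.2),
      mul_nonneg (sub_nonneg.mpr hS.2) (by linarith [hN.1] : (0:ℝ) ≤ 2 + |κ| + Np τ),
      mul_nonneg (by linarith [hS.1] : (0:ℝ) ≤ 1 + Sp τ) (sub_nonneg.mpr hN.2),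
      mul_nonneg (by linarith [hS.1] : (0:ℝ) ≤ 1 + Sp τ)
        (by linarith [hN.1] : (0:ℝ) ≤ 2 + |κ| + Np τ), abs_nonneg κ]

include hvac in
lemma traj_lipschitz (τ₁ τ₂ : ℝ) :
    dist (traj Sp St Dl Ap Np τ₁) (traj Sp St Dl Ap Np τ₂) ≤ (20 + 4*|κ|) * |τ₁ - τ₂| := by
  have hK : (0:ℝ) ≤ 20 + 4*|κ| := by positivity
  have lip : ∀ (f : ℝ → ℝ), Differentiable ℝ f → (∀ τ, |deriv f τ| ≤ 20 + 4*|κ|) →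
      |f τ₁ - f τ₂| ≤ (20 + 4*|κ|) * |τ₁ - τ₂| := by
    intro f hf hb
    have := lipschitzWith_of_nnnorm_deriv_le hf (C := Real.toNNReal (20 + 4*|κ|))
      (fun x => by
        rw [← NNReal.coe_le_coe, coe_nnnorm, Real.norm_eq_abs, Real.coe_toNNReal _ hK]
        exact hb x)
    have h2 := this.dist_le_mul τ₁ τ₂
    rwa [Real.dist_eq, Real.dist_eq, Real.coe_toNNReal _ hK] at h2
  have h1 := lip Sp hsol.diff_Sp (deriv_Sp_bound hsol hvac)
  have h2 := lip St hsol.diff_St (deriv_St_bound hsol hvac)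
  have h3 := lip Dl hsol.diff_Dl (deriv_Dl_bound hsol hvac)
  have h4 := lip Ap hsol.diff_Ap (deriv_Ap_bound hsol hvac)
  have h5 := lip Np hsol.diff_Np (deriv_Np_bound hsol hvac)
  simp only [traj, Prod.dist_eq, Real.dist_eq]
  exact max_le h1 (max_le h2 (max_le h3 (max_le h4 h5)))

include hvac in
lemma G_hasDeriv (τ : ℝ) :
    HasDerivAt (fun τ => Ap τ - (1 + Sp τ)^2)
      (4 * (Ap τ*(2*Sp τ*(1+Sp τ) + St τ) + NT κ Ap Np τ*(1+Sp τ)^2)) τ := by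
  have hA : HasDerivAt Ap (deriv Ap τ) τ := (hsol.diff_Ap τ).hasDerivAt
  have h1 : HasDerivAt (fun τ => 1 + Sp τ) (deriv Sp τ) τ :=
    ((hsol.diff_Sp τ).hasDerivAt).const_add 1
  have hS : HasDerivAt (fun τ => (1 + Sp τ)^2) (2*(1+Sp τ)*deriv Sp τ) τ := by
    have := h1.fun_pow 2
    simpa [mul_comm, mul_assoc, mul_left_comm] using this
  have hsub : HasDerivAt (fun τ => Ap τ - (1 + Sp τ)^2)
      (deriv Ap τ - 2*(1+Sp τ)*deriv Sp τ) τ := hA.fun_sub hS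
  convert hsub using 1
  rw [hsol.ev_Ap τ, hsol.ev_Sp τ, q_eq hvac τ]
  have h := hvac τ
  simp only [OmF, NT] at h ⊢
  linear_combination (-4*Sp τ*(1+Sp τ)) * h

lemma B_nonneg_τ (τ : ℝ) :
    0 ≤ Ap τ*(2*Sp τ*(1+Sp τ) + St τ) + NT κ Ap Np τ*(1+Sp τ)^2 :=
  B_nonneg_pt (Sp τ) (St τ) (Dl τ) (Ap τ) (NT κ Ap Np τ) (hsol.con_St τ)
    (hsol.con_Ap τ) (hsol.con_NT τ) (hsol.con_main τ)

include hvac in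
lemma G_mono : Monotone (fun τ => Ap τ - (1 + Sp τ)^2) := by
  have hdiff : Differentiable ℝ (fun τ => Ap τ - (1 + Sp τ)^2) :=
    hsol.diff_Ap.sub (((differentiable_const (1:ℝ)).add hsol.diff_Sp).pow 2)
  refine monotone_of_deriv_nonneg hdiff (fun τ => ?_)
  rw [(G_hasDeriv hsol hvac τ).deriv]
  linarith [B_nonneg_τ hsol τ]

lemma G_bddBelow : BddBelow (Set.range (fun τ => Ap τ - (1 + Sp τ)^2)) := by
  refine ⟨-4, fun x hx => ?_⟩
  obtain ⟨τ, rfl⟩ := hx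
  have hS := abs_le.mp (S_abs_le hsol τ)
  have : -4 ≤ Ap τ - (1 + Sp τ)^2 := by nlinarith [hsol.con_Ap τ]
  simpa using this

set_option maxHeartbeats 1000000 in
include hvac in
lemma alpha_key (ps pt pd pa pn : ℝ)
    (hp : AlphaLimitPt Sp St Dl Ap Np (ps, pt, pd, pa, pn)) :
    pa - (1+ps)^2 = (⨅ τ, (Ap τ - (1 + Sp τ)^2)) ∧
    0 ≤ pt ∧ 0 ≤ pa ∧ 0 ≤ (1/3)*(pn^2 - κ*pa) ∧
    ps^2 + pt + pa + (1/3)*(pn^2 - κ*pa) = 1 ∧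
    pt*((1/3)*(pn^2 - κ*pa)) - pd^2 - ps^2*pa = 0 ∧
    pa*(2*ps*(1+ps) + pt) + ((1/3)*(pn^2 - κ*pa))*(1+ps)^2 = 0 := by
  obtain ⟨u, hu_bot, hu_lim⟩ := hp
  -- component limits
  have hcS : Tendsto (fun k => Sp (u k)) atTop (𝓝 ps) := by
    have := (continuous_fst.tendsto _).comp hu_lim
    simpa [traj, Function.comp_def] using this
  have hcT : Tendsto (fun k => St (u k)) atTop (𝓝 pt) := by
    have h2 : Continuous (fun v : ℝ × ℝ × ℝ × ℝ × ℝ => v.2.1) := by fun_prop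
    have := (h2.tendsto _).comp hu_lim
    simpa [traj, Function.comp_def] using this
  have hcD : Tendsto (fun k => Dl (u k)) atTop (𝓝 pd) := by
    have h2 : Continuous (fun v : ℝ × ℝ × ℝ × ℝ × ℝ => v.2.2.1) := by fun_prop
    have := (h2.tendsto _).comp hu_lim
    simpa [traj, Function.comp_def] using this
  have hcA : Tendsto (fun k => Ap (u k)) atTop (𝓝 pa) := by
    have h2 : Continuous (fun v : ℝ × ℝ × ℝ × ℝ × ℝ => v.2.2.2.1) := by fun_prop
    have := (h2.tendsto _).comp hu_lim
    simpa [traj, Function.comp_def] using this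
  have hcN : Tendsto (fun k => Np (u k)) atTop (𝓝 pn) := by
    have h2 : Continuous (fun v : ℝ × ℝ × ℝ × ℝ × ℝ => v.2.2.2.2) := by fun_prop
    have := (h2.tendsto _).comp hu_lim
    simpa [traj, Function.comp_def] using this
  have hcNT : Tendsto (fun k => NT κ Ap Np (u k)) atTop (𝓝 ((1/3)*(pn^2 - κ*pa))) := by
    simp only [NT]
    exact ((hcN.pow 2).sub (hcA.const_mul κ)).const_mul (1/3)
  -- constraints in the limit
  have hT0 : 0 ≤ pt := ge_of_tendsto' hcT (fun k => hsol.con_St (u k))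
  have hA0 : 0 ≤ pa := ge_of_tendsto' hcA (fun k => hsol.con_Ap (u k))
  have hNt0 : 0 ≤ (1/3)*(pn^2 - κ*pa) := ge_of_tendsto' hcNT (fun k => hsol.con_NT (u k))
  have hsum : ps^2 + pt + pa + (1/3)*(pn^2 - κ*pa) = 1 := by
    have hcomb : Tendsto (fun k => Sp (u k)^2 + St (u k) + Ap (u k) + NT κ Ap Np (u k))
        atTop (𝓝 (ps^2 + pt + pa + (1/3)*(pn^2 - κ*pa))) :=
      (((hcS.pow 2).add hcT).add hcA).add hcNT
    have hconst : Tendsto (fun k => Sp (u k)^2 + St (u k) + Ap (u k) + NT κ Ap Np (u k))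
        atTop (𝓝 1) := by
      have hk : ∀ k, Sp (u k)^2 + St (u k) + Ap (u k) + NT κ Ap Np (u k) = 1 := by
        intro k
        have := hvac (u k)
        simp only [OmF] at this
        linarith
      simpa [hk] using (tendsto_const_nhds : Tendsto (fun _ : ℕ => (1:ℝ)) atTop (𝓝 1))
    exact tendsto_nhds_unique hcomb hconst
  have hmain : pt*((1/3)*(pn^2 - κ*pa)) - pd^2 - ps^2*pa = 0 := by
    have hcomb : Tendsto
        (fun k => St (u k) * NT κ Ap Np (u k) - Dl (u k)^2 - Sp (u k)^2 * Ap (u k))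
        atTop (𝓝 (pt*((1/3)*(pn^2 - κ*pa)) - pd^2 - ps^2*pa)) :=
      ((hcT.mul hcNT).sub (hcD.pow 2)).sub ((hcS.pow 2).mul hcA)
    have hconst : Tendsto
        (fun k => St (u k) * NT κ Ap Np (u k) - Dl (u k)^2 - Sp (u k)^2 * Ap (u k))
        atTop (𝓝 0) := by
      simpa [hsol.con_main] using (tendsto_const_nhds : Tendsto (fun _ : ℕ => (0:ℝ)) atTop (𝓝 0))
    exact tendsto_nhds_unique hcomb hconst
  -- G-limit
  have hGbot : Tendsto (fun τ => Ap τ - (1 + Sp τ)^2) atBot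
      (𝓝 (⨅ τ, (Ap τ - (1 + Sp τ)^2))) :=
    tendsto_atBot_ciInf (G_mono hsol hvac) (G_bddBelow hsol)
  have hGL : pa - (1+ps)^2 = (⨅ τ, (Ap τ - (1 + Sp τ)^2)) := by
    have h1 : Tendsto (fun k => Ap (u k) - (1 + Sp (u k))^2) atTop (𝓝 (pa - (1+ps)^2)) :=
      hcA.sub ((tendsto_const_nhds.add hcS).pow 2)
    have h2 : Tendsto (fun k => Ap (u k) - (1 + Sp (u k))^2) atTop
        (𝓝 (⨅ τ, (Ap τ - (1 + Sp τ)^2))) := hGbot.comp hu_bot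
    exact tendsto_nhds_unique h1 h2
  -- B vanishes at the limit point
  have hBge : 0 ≤ pa*(2*ps*(1+ps) + pt) + ((1/3)*(pn^2 - κ*pa))*(1+ps)^2 :=
    B_nonneg_pt ps pt pd pa _ hT0 hA0 hNt0 hmain
  have hBle : ¬ (0 < pa*(2*ps*(1+ps) + pt) + ((1/3)*(pn^2 - κ*pa))*(1+ps)^2) := by
    intro hc0
    obtain ⟨c, hcdef⟩ : ∃ c : ℝ, c = pa*(2*ps*(1+ps) + pt) + ((1/3)*(pn^2 - κ*pa))*(1+ps)^2 :=
      ⟨_, rfl⟩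
    have hc : 0 < c := by rw [hcdef]; exact hc0
    set L : ℝ := ⨅ τ, (Ap τ - (1 + Sp τ)^2) with hLdef
    have hBcont : Continuous (fun v : ℝ × ℝ × ℝ × ℝ × ℝ =>
        v.2.2.2.1*(2*v.1*(1+v.1) + v.2.1) + ((1/3)*(v.2.2.2.2^2 - κ*v.2.2.2.1))*(1+v.1)^2) := by
      fun_prop
    have hnhds : (fun v : ℝ × ℝ × ℝ × ℝ × ℝ =>
        v.2.2.2.1*(2*v.1*(1+v.1) + v.2.1) + ((1/3)*(v.2.2.2.2^2 - κ*v.2.2.2.1))*(1+v.1)^2) ⁻¹'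
        (Set.Ioi (c/2)) ∈ 𝓝 ((ps, pt, pd, pa, pn) : ℝ × ℝ × ℝ × ℝ × ℝ) := by
      apply hBcont.continuousAt.preimage_mem_nhds
      exact Ioi_mem_nhds (by simp only []; linarith [hc, hcdef])
    obtain ⟨δ, hδpos, hball⟩ := Metric.mem_nhds_iff.mp hnhds
    set K : ℝ := 20 + 4*|κ| with hKdef
    have hK : 0 < K := by positivity
    set ε : ℝ := δ/(2*K) with hεdef
    have hε : 0 < ε := by positivity
    have hKε : K * ε = δ/2 := by rw [hεdef]; field_simp
    have key : ∀ m, L + 2*c*ε ≤ Ap (u m) - (1 + Sp (u m))^2 := by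
      intro m
      have ev1 : ∀ᶠ k in atTop, u k ≤ u m - ε := hu_bot.eventually (eventually_le_atBot _)
      have ev2 : ∀ᶠ k in atTop,
          dist (traj Sp St Dl Ap Np (u k)) ((ps, pt, pd, pa, pn) : ℝ × ℝ × ℝ × ℝ × ℝ) < δ/2 :=
        Metric.tendsto_nhds.mp hu_lim (δ/2) (by positivity)
      obtain ⟨k, hk1, hk2⟩ := (ev1.and ev2).exists
      have hBlow : ∀ σ ∈ Set.Icc (u k) (u k + ε),
          c/2 < Ap σ*(2*Sp σ*(1+Sp σ) + St σ) + NT κ Ap Np σ*(1+Sp σ)^2 := by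
        intro σ hσ
        have hd1 : dist (traj Sp St Dl Ap Np σ) (traj Sp St Dl Ap Np (u k)) ≤ K * |σ - u k| :=
          traj_lipschitz hsol hvac σ (u k)
        have habs : |σ - u k| ≤ ε := by
          rw [abs_le]; constructor <;> [linarith [hσ.1]; linarith [hσ.2]]
        have hd2 : dist (traj Sp St Dl Ap Np σ)
            ((ps, pt, pd, pa, pn) : ℝ × ℝ × ℝ × ℝ × ℝ) < δ := by
          have h31 : K * |σ - u k| ≤ K * ε := by gcongr
          have h3 : dist (traj Sp St Dl Ap Np σ) (traj Sp St Dl Ap Np (u k)) ≤ K * ε :=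
            le_trans hd1 h31
          have h4 := lt_of_le_of_lt (dist_triangle (traj Sp St Dl Ap Np σ)
            (traj Sp St Dl Ap Np (u k)) ((ps, pt, pd, pa, pn) : ℝ × ℝ × ℝ × ℝ × ℝ))
            (add_lt_add_of_le_of_lt h3 hk2)
          rw [hKε] at h4
          linarith [h4]
        have := hball (Metric.mem_ball.mpr hd2)
        simp only [Set.mem_preimage, Set.mem_Ioi, traj, NT] at this ⊢
        linarith
      have hψ : MonotoneOn (fun σ => (Ap σ - (1 + Sp σ)^2) - 2*c*σ)
          (Set.Icc (u k) (u k + ε)) := by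
        apply monotoneOn_of_deriv_nonneg (convex_Icc _ _)
        · apply Continuous.continuousOn
          have : Continuous (fun σ => Ap σ - (1 + Sp σ)^2) :=
            (hsol.diff_Ap.sub (((differentiable_const (1:ℝ)).add hsol.diff_Sp).pow 2)).continuous
          fun_prop
        · apply Differentiable.differentiableOn
          intro σ
          have hlin : HasDerivAt (fun x : ℝ => 2*c*x) (2*c) σ := by
            simpa using (hasDerivAt_id σ).const_mul (2*c)
          exact ((G_hasDeriv hsol hvac σ).sub hlin).differentiableAt
        · intro σ hσ
          rw [interior_Icc] at hσ
          have hlin : HasDerivAt (fun x : ℝ => 2*c*x) (2*c) σ := by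
            simpa using (hasDerivAt_id σ).const_mul (2*c)
          have hder := ((G_hasDeriv hsol hvac σ).fun_sub hlin).deriv
          rw [hder]
          have := hBlow σ ⟨le_of_lt hσ.1, le_of_lt hσ.2⟩
          linarith [this]
      have hend := hψ (Set.left_mem_Icc.mpr (by linarith)) (Set.right_mem_Icc.mpr (by linarith))
        (by linarith)
      simp only [] at hend
      have hstep : Ap (u k) - (1 + Sp (u k))^2 + 2*c*ε ≤ Ap (u k + ε) - (1 + Sp (u k + ε))^2 := by
        nlinarith [hend]
      have hLle : L ≤ Ap (u k) - (1 + Sp (u k))^2 := ciInf_le (G_bddBelow hsol) (u k)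
      have hfin : Ap (u k + ε) - (1 + Sp (u k + ε))^2 ≤ Ap (u m) - (1 + Sp (u m))^2 :=
        G_mono hsol hvac (by linarith : u k + ε ≤ u m)
      linarith
    have hlim : Tendsto (fun m => Ap (u m) - (1 + Sp (u m))^2) atTop (𝓝 L) := hGbot.comp hu_bot
    have hcontra := ge_of_tendsto' hlim key
    nlinarith [hcontra, hc, hε]
  have hB0 : pa*(2*ps*(1+ps) + pt) + ((1/3)*(pn^2 - κ*pa))*(1+ps)^2 = 0 := by
    rcases eq_or_lt_of_le hBge with h | h
    · exact h.symm
    · exact absurd h hBle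
  exact ⟨hGL, hT0, hA0, hNt0, hsum, hmain, hB0⟩

include hvac in
lemma equilibrium_derivs (τ : ℝ)
    (hmem : (traj Sp St Dl Ap Np τ) ∈ Kasner ∪ PlaneWave κ) :
    deriv Sp τ = 0 ∧ deriv St τ = 0 ∧ deriv Dl τ = 0 ∧ deriv Ap τ = 0 ∧ deriv Np τ = 0 := by
  have hq := q_eq (γ := γ) hvac τ
  rcases hmem with ⟨s, _, hK⟩ | ⟨s, n, hs, hn, hP⟩
  · simp only [traj, Prod.mk.injEq] at hK
    obtain ⟨h1, h2, h3, h4, h5⟩ := hK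
    have hNt : NT κ Ap Np τ = 0 := by simp [NT, h4, h5]
    refine ⟨?_, ?_, ?_, ?_, ?_⟩
    · rw [hsol.ev_Sp τ, hq, hNt, h1, h2]; ring
    · rw [hsol.ev_St τ, hq, h1, h2, h3, h4, h5]; ring
    · rw [hsol.ev_Dl τ, hq, hNt, h1, h2, h3, h5]; ring
    · rw [hsol.ev_Ap τ, h4]; ring
    · rw [hsol.ev_Np τ, h3, h5]; ring
  · simp only [traj, Prod.mk.injEq] at hP
    obtain ⟨h1, h2, h3, h4, h5⟩ := hP
    have hNt : NT κ Ap Np τ = -s*(1+s) := by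
      simp only [NT, h4, h5]
      linear_combination (1/3) * hn
    refine ⟨?_, ?_, ?_, ?_, ?_⟩
    · rw [hsol.ev_Sp τ, hq, hNt, h1, h2]; ring
    · rw [hsol.ev_St τ, hq, h1, h2, h3, h4, h5]; ring
    · rw [hsol.ev_Dl τ, hq, hNt, h1, h2, h3, h5]; ring
    · rw [hsol.ev_Ap τ, hq, h1, h2, h4]; ring
    · rw [hsol.ev_Np τ, hq, h1, h2, h3, h5]; ring

end SolBounds

end BBaux

theorem stmt0 (γ κ : ℝ) (Sp St Dl Ap Np : ℝ → ℝ)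
    (hsol : BianchiB γ κ Sp St Dl Ap Np)
    (hvac : Vacuum κ Sp St Ap Np) :
    (∀ p : ℝ × ℝ × ℝ × ℝ × ℝ, AlphaLimitPt Sp St Dl Ap Np p → p ∈ Kasner ∪ PlaneWave κ) ∧
    ((∃ p ∈ PlaneWave κ, AlphaLimitPt Sp St Dl Ap Np p) → IsConstSol Sp St Dl Ap Np) := by
  constructor
  · rintro ⟨ps, pt, pd, pa, pn⟩ hp
    obtain ⟨_, hT0, hA0, hNt0, hsum, hmain, hB0⟩ :=
      BBaux.alpha_key hsol hvac ps pt pd pa pn hp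
    exact BBaux.charE_pt κ ps pt pd pa pn hT0 hA0 hNt0 hsum hmain hB0
  · rintro ⟨p, hpPW, hpα⟩
    obtain ⟨s, n, hs, hn, rfl⟩ := hpPW
    obtain ⟨hGL, -, -, -, -, -, -⟩ :=
      BBaux.alpha_key hsol hvac s (-s*(1+s)) 0 ((1+s)^2) n hpα
    have hL0 : (⨅ τ, (Ap τ - (1 + Sp τ)^2)) = 0 := by rw [← hGL]; ring
    have hG0 : ∀ τ, Ap τ - (1 + Sp τ)^2 = 0 := by
      intro τ
      have h1 : (⨅ τ, (Ap τ - (1 + Sp τ)^2)) ≤ Ap τ - (1 + Sp τ)^2 :=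
        ciInf_le (BBaux.G_bddBelow hsol) τ
      have hsumτ : (Sp τ)^2 + St τ + Ap τ + NT κ Ap Np τ = 1 := by
        have := hvac τ; simp only [OmF] at this; linarith
      have h2 : Ap τ ≤ (1 + Sp τ)^2 :=
        BBaux.claimA_pt (Sp τ) (St τ) (Dl τ) (Ap τ) (NT κ Ap Np τ)
          (hsol.con_St τ) (hsol.con_Ap τ) (hsol.con_NT τ) (hsol.con_main τ) hsumτ
      rw [hL0] at h1
      linarith
    have hGfun : (fun τ => Ap τ - (1 + Sp τ)^2) = (fun _ => (0:ℝ)) := funext hG0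
    have hB0τ : ∀ τ, Ap τ*(2*Sp τ*(1+Sp τ) + St τ) + NT κ Ap Np τ*(1+Sp τ)^2 = 0 := by
      intro τ
      have hd := (BBaux.G_hasDeriv hsol hvac τ).deriv
      rw [hGfun, deriv_const] at hd
      linarith
    have hmem : ∀ τ, (traj Sp St Dl Ap Np τ) ∈ Kasner ∪ PlaneWave κ := by
      intro τ
      have hsumτ : (Sp τ)^2 + St τ + Ap τ + NT κ Ap Np τ = 1 := by
        have := hvac τ; simp only [OmF] at this; linarith
      have h := BBaux.charE_pt κ (Sp τ) (St τ) (Dl τ) (Ap τ) (Np τ)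
        (hsol.con_St τ) (hsol.con_Ap τ) (hsol.con_NT τ) hsumτ (hsol.con_main τ) (hB0τ τ)
      exact h
    have hder := fun σ => BBaux.equilibrium_derivs hsol hvac σ (hmem σ)
    intro τ
    simp only [traj, Prod.mk.injEq]
    exact ⟨is_const_of_deriv_eq_zero hsol.diff_Sp (fun σ => (hder σ).1) τ 0,
      is_const_of_deriv_eq_zero hsol.diff_St (fun σ => (hder σ).2.1) τ 0,
      is_const_of_deriv_eq_zero hsol.diff_Dl (fun σ => (hder σ).2.2.1) τ 0,
      is_const_of_deriv_eq_zero hsol.diff_Ap (fun σ => (hder σ).2.2.2.1) τ 0,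
      is_const_of_deriv_eq_zero hsol.diff_Np (fun σ => (hder σ).2.2.2.2) τ 0⟩
end

section
/- Let Γ be an inflationary solution of the Bianchi class B system. Then every α-limit point of Γ lies in K ∪ P_κ ∪ {(0,0,0,0,0)}. If (0,0,0,0,0) is an α-limit point of Γ, then Γ is the constant solution at (0,0,0,0,0). Moreover, Γ cannot have both an α-limit point in K ∖ {Taub 1} and an α-limit point in P_κ. -/
open Real Filter Topology MeasureTheory

lemma E_nonneg (S T D A Nn : ℝ) (hT : 0 ≤ T) (hA : 0 ≤ A) (hNn : 0 ≤ Nn)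
    (hcon : T*Nn - D^2 - S^2*A = 0) :
    0 ≤ (1+S)^2*Nn + (2*S*(1+S)+T)*A := by
  rcases eq_or_lt_of_le hNn with h0 | hpos
  · have hD2 : D^2 + S^2*A = 0 := by nlinarith [h0]
    have hSA : S^2*A = 0 := by nlinarith [sq_nonneg D, mul_nonneg (sq_nonneg S) hA]
    have hSA0 : S * A = 0 := by
      by_cases hA0 : A = 0
      · simp [hA0]
      · have hApos : 0 < A := lt_of_le_of_ne hA (Ne.symm hA0)
        have hS0 : S = 0 := by
          have : S^2 = 0 := by
            by_contra hs
            have : 0 < S^2 := lt_of_le_of_ne (sq_nonneg S) (Ne.symm hs)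
            nlinarith
          exact pow_eq_zero_iff (n := 2) (by norm_num) |>.mp this
        simp [hS0]
    nlinarith [mul_nonneg hT hA, hSA0, hSA, h0]
  · have key : Nn * ((1+S)^2*Nn + (2*S*(1+S)+T)*A)
        = ((1+S)*Nn + S*A)^2 + A*D^2 + (T*Nn - D^2 - S^2*A)*A := by ring
    rw [hcon] at key
    have h1 : 0 ≤ Nn * ((1+S)^2*Nn + (2*S*(1+S)+T)*A) := by
      rw [key]
      positivity
    exact (mul_nonneg_iff_of_pos_left hpos).mp h1

lemma algebra_classify (κ s σ δ a n : ℝ) (hσ : 0 ≤ σ) (ha : 0 ≤ a)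
    (hn : 0 ≤ (1/3) * (n^2 - κ*a))
    (hsum : s^2 + σ + a + (1/3) * (n^2 - κ*a) = 1)
    (hcon : σ * ((1/3) * (n^2 - κ*a)) - δ^2 - s^2*a = 0)
    (hE : (1+s)^2 * ((1/3) * (n^2 - κ*a)) + (2*s*(1+s)+σ)*a = 0) :
    ((s, σ, δ, a, n) : ℝ × ℝ × ℝ × ℝ × ℝ) ∈ Kasner ∪ PlaneWave κ := by
  set Nn : ℝ := (1/3) * (n^2 - κ*a) with hNndef
  have hs2 : s^2 ≤ 1 := by nlinarith
  have hs1 : -1 ≤ s ∧ s ≤ 1 := abs_le.mp ((sq_le_one_iff_abs_le_one s).mp hs2)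
  rcases eq_or_lt_of_le ha with hA0 | hApos
  · -- a = 0 : Kasner
    have ha0 : a = 0 := hA0.symm
    subst ha0
    have hδn : σ * Nn = δ^2 := by linarith [hcon]
    rcases eq_or_lt_of_le hn with hNn0 | hNnpos
    · -- Nn = 0
      have hNn0' : Nn = 0 := hNn0.symm
      have hδ : δ = 0 := by
        have : δ^2 = 0 := by rw [← hδn, hNn0']; ring
        exact pow_eq_zero_iff (n := 2) (by norm_num) |>.mp this
      have hn0 : n = 0 := by
        have : n^2 = 0 := by
          have := hNndef
          nlinarith [hNn0']
        exact pow_eq_zero_iff (n := 2) (by norm_num) |>.mp this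
      left
      exact ⟨s, ⟨hs1.1, hs1.2⟩, by
        have hσ1 : σ = 1 - s^2 := by nlinarith [hNn0']
        simp [hσ1, hδ, hn0]⟩
    · -- Nn > 0, a = 0 : E = (1+s)^2 Nn = 0 ⇒ s = -1 ⇒ σ + Nn = 0 ⇒ both 0, contra Nn > 0
      exfalso
      have hs : (1+s)^2 = 0 := by
        have h1 : (1+s)^2 * Nn = 0 := by nlinarith [hE]
        rcases mul_eq_zero.mp h1 with h | h
        · exact h
        · exact absurd h (ne_of_gt hNnpos)
      have hsm1 : s = -1 := by nlinarith [hs]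
      nlinarith [hsm1, hsum, hσ]
  · -- a > 0 : PlaneWave
    right
    rcases eq_or_lt_of_le hn with hNn0 | hNnpos
    · -- Nn = 0 : δ = 0, s = 0, σ = 0, a = 1
      have hNn0' : Nn = 0 := hNn0.symm
      have hD2 : δ^2 + s^2*a = 0 := by linear_combination -hcon + σ*hNn0'
      have hδ : δ = 0 := by
        have : δ^2 = 0 := by nlinarith [sq_nonneg δ, mul_nonneg (sq_nonneg s) ha]
        exact pow_eq_zero_iff (n := 2) (by norm_num) |>.mp this
      have hs0 : s = 0 := by
        have h1 : s^2*a = 0 := by linear_combination hD2 - δ*hδ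
        have h2 : s^2 = 0 := by
          rcases mul_eq_zero.mp h1 with h | h
          · exact h
          · exact absurd h (ne_of_gt hApos)
        exact pow_eq_zero_iff (n := 2) (by norm_num) |>.mp h2
      have hσ0 : σ = 0 := by
        have h1 : σ * a = 0 := by
          linear_combination hE - (1+s)^2*hNn0' - (2*(1+s)*a)*hs0
        rcases mul_eq_zero.mp h1 with h | h
        · exact h
        · exact absurd h (ne_of_gt hApos)
      have ha1 : a = 1 := by linear_combination hsum - hNn0' - s*hs0 - hσ0
      refine ⟨0, n, by norm_num, ?_, ?_⟩
      · have : n^2 = κ := by linear_combination (-3:ℝ)*hNndef + 3*hNn0' + κ*ha1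
        rw [this]; ring
      · rw [hs0, hσ0, hδ, ha1]; norm_num
    · -- Nn > 0, a > 0
      have key : Nn * ((1+s)^2*Nn + (2*s*(1+s)+σ)*a)
          = ((1+s)*Nn + s*a)^2 + a*δ^2 + (σ*Nn - δ^2 - s^2*a)*a := by ring
      have hKE : Nn * ((1+s)^2*Nn + (2*s*(1+s)+σ)*a) = 0 := by rw [hE, mul_zero]
      have h0 : ((1+s)*Nn + s*a)^2 + a*δ^2 = 0 := by
        linear_combination (-1 : ℝ) * key + hKE - a * hcon
      have haδ : a*δ^2 = 0 := by
        nlinarith [sq_nonneg ((1+s)*Nn + s*a), mul_nonneg (le_of_lt hApos) (sq_nonneg δ)]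
      have hδ : δ = 0 := by
        have h1 : δ^2 = 0 := by
          rcases mul_eq_zero.mp haδ with h | h
          · exact absurd h (ne_of_gt hApos)
          · exact h
        exact pow_eq_zero_iff (n := 2) (by norm_num) |>.mp h1
      have hlin : (1+s)*Nn + s*a = 0 := by
        have h1 : ((1+s)*Nn + s*a)^2 = 0 := by linear_combination h0 - haδ
        exact pow_eq_zero_iff (n := 2) (by norm_num) |>.mp h1
      have hsne : s ≠ -1 := by
        intro h
        have ha0 : a = 0 := by linear_combination (Nn + a)*h - hlin
        exact (ne_of_gt hApos) ha0
      have hs1' : -1 < s := lt_of_le_of_ne hs1.1 (Ne.symm hsne)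
      have h1s : 0 < 1 + s := by linarith
      have hslt0 : s < 0 := by
        by_contra hge
        push_neg at hge
        have h2 := mul_pos h1s hNnpos
        have h3 := mul_nonneg hge (le_of_lt hApos)
        linarith [hlin]
      have hσNn : σ * Nn = s^2 * a := by linear_combination hcon + δ*hδ
      have hσval : σ = -s*(1+s) := by
        have h4 : (σ + s*(1+s)) * (s*a) = 0 := by
          linear_combination σ*hlin - (1+s)*hσNn
        have hsa : s*a ≠ 0 := ne_of_lt (mul_neg_of_neg_of_pos hslt0 hApos)
        have h5 : σ + s*(1+s) = 0 := by
          rcases mul_eq_zero.mp h4 with h | h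
          · exact h
          · exact absurd h hsa
        linarith
      have haval : a = (1+s)^2 := by
        have h5 : (1+s) * (s^2 + σ + a + Nn) = (1+s) * 1 := by rw [hsum]
        linear_combination h5 - hlin - (1+s)*hσval
      have hNnval : Nn = -s*(1+s) := by
        have h7 : (1+s)*(Nn + s*(1+s)) = 0 := by linear_combination hlin - s*haval
        rcases mul_eq_zero.mp h7 with h | h
        · exact absurd h (ne_of_gt h1s)
        · linarith
      have hnval : n^2 = (1+s)*(κ*(1+s) - 3*s) := by
        linear_combination -(3:ℝ)*hNndef + 3*hNnval + κ*haval
      exact ⟨s, n, hs1', hnval, by rw [hσval, hδ, haval]⟩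

lemma monoOn_Icc {f f' : ℝ → ℝ} {a b : ℝ} (hder : ∀ x ∈ Set.Icc a b, HasDerivAt f (f' x) x)
    (hnn : ∀ x ∈ Set.Icc a b, 0 ≤ f' x) : MonotoneOn f (Set.Icc a b) := by
  apply monotoneOn_of_deriv_nonneg (convex_Icc a b)
  · exact fun x hx => (hder x hx).continuousAt.continuousWithinAt
  · exact fun x hx =>
      ((hder x (interior_subset hx)).differentiableAt).differentiableWithinAt
  · intro x hx
    rw [(hder x (interior_subset hx)).deriv]
    exact hnn x (interior_subset hx)

lemma lasalle {W Wd hfun hd : ℝ → ℝ} {T₁ w B e : ℝ} (hB : 0 < B)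
    (hWder : ∀ τ ≤ T₁, HasDerivAt W (Wd τ) τ)
    (hWd4 : ∀ τ ≤ T₁, 4 * hfun τ ≤ Wd τ)
    (hWlim : Tendsto W atBot (𝓝 w))
    (hhder : ∀ τ ≤ T₁, HasDerivAt hfun (hd τ) τ)
    (hdB : ∀ τ ≤ T₁, |hd τ| ≤ B)
    (t : ℕ → ℝ) (ht : Tendsto t atTop atBot)
    (he : Tendsto (fun n => hfun (t n)) atTop (𝓝 e)) : e ≤ 0 := by
  by_contra hpos
  push_neg at hpos
  set δ : ℝ := e / (2*B) with hδdef
  have hδpos : 0 < δ := by positivity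
  have hkey : ∀ n, t n ≤ T₁ → 3*e/4 ≤ hfun (t n) → e*δ ≤ W (t n) - W (t n - δ) := by
    intro n htn hhn
    have hsub : Set.Icc (t n - δ) (t n) ⊆ Set.Iic T₁ := fun x hx => le_trans hx.2 htn
    -- lower bound for hfun on the interval
    have hmono1 : MonotoneOn (fun τ => B*τ - hfun τ) (Set.Icc (t n - δ) (t n)) := by
      apply monoOn_Icc (f' := fun τ => B - hd τ)
      · intro x hx
        have hBt : HasDerivAt (fun τ : ℝ => B*τ) B x := by
          simpa using (hasDerivAt_id x).const_mul B
        exact hBt.sub (hhder x (hsub hx))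
      · intro x hx
        have := abs_le.mp (hdB x (hsub hx))
        linarith [this.2]
    have hflow : ∀ x ∈ Set.Icc (t n - δ) (t n), e/4 ≤ hfun x := by
      intro x hx
      have h1 : B*x - hfun x ≤ B*(t n) - hfun (t n) :=
        hmono1 hx (Set.right_mem_Icc.mpr (by linarith)) hx.2
      have hxx : t n - x ≤ δ := by linarith [hx.1]
      have h4 := mul_le_mul_of_nonneg_left hxx (le_of_lt hB)
      rw [mul_sub] at h4
      have h3 : B*δ = e/2 := by rw [hδdef]; field_simp
      linarith [h1, h4, h3, hhn]
    -- monotonicity of W τ - e τ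
    have hmono2 : MonotoneOn (fun τ => W τ - e*τ) (Set.Icc (t n - δ) (t n)) := by
      apply monoOn_Icc (f' := fun τ => Wd τ - e)
      · intro x hx
        have het : HasDerivAt (fun τ : ℝ => e*τ) e x := by
          simpa using (hasDerivAt_id x).const_mul e
        exact (hWder x (hsub hx)).sub het
      · intro x hx
        have := hflow x hx
        have := hWd4 x (hsub hx)
        linarith
    have h4 : W (t n - δ) - e*(t n - δ) ≤ W (t n) - e*(t n) :=
      hmono2 (Set.left_mem_Icc.mpr (by linarith)) (Set.right_mem_Icc.mpr (by linarith))
        (by linarith)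
    nlinarith [h4]
  have hev1 : ∀ᶠ n in atTop, t n ≤ T₁ := ht.eventually (eventually_le_atBot T₁)
  have hev2 : ∀ᶠ n in atTop, 3*e/4 ≤ hfun (t n) :=
    he.eventually (eventually_ge_nhds (by linarith : 3*e/4 < e))
  have hev : ∀ᶠ n in atTop, e*δ ≤ W (t n) - W (t n - δ) := by
    filter_upwards [hev1, hev2] with n h1 h2
    exact hkey n h1 h2
  have hlim1 : Tendsto (fun n => W (t n)) atTop (𝓝 w) := hWlim.comp ht
  have hlim2 : Tendsto (fun n => W (t n - δ)) atTop (𝓝 w) := by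
    apply hWlim.comp
    exact tendsto_atBot_add_const_right atTop (-δ) ht
  have hlim : Tendsto (fun n => W (t n) - W (t n - δ)) atTop (𝓝 (w - w)) :=
    hlim1.sub hlim2
  have : e*δ ≤ w - w := ge_of_tendsto hlim hev
  nlinarith [this]

section auxiliary

variable {γ κ : ℝ} {Sp St Dl Ap Np : ℝ → ℝ}

/-- The key function `E` along the solution. -/
noncomputable def EFt (κ : ℝ) (Sp St Ap Np : ℝ → ℝ) (τ : ℝ) : ℝ :=
  (1 + Sp τ)^2 * NT κ Ap Np τ + (2*Sp τ*(1+Sp τ) + St τ) * Ap τ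

lemma bb_hdSp (h : BianchiB γ κ Sp St Dl Ap Np) (τ : ℝ) :
    HasDerivAt Sp ((qF γ κ Sp St Ap Np τ - 2) * Sp τ - 2 * NT κ Ap Np τ) τ :=
  h.ev_Sp τ ▸ (h.diff_Sp τ).hasDerivAt

lemma bb_hdSt (h : BianchiB γ κ Sp St Dl Ap Np) (τ : ℝ) :
    HasDerivAt St (2*(qF γ κ Sp St Ap Np τ - 2) * St τ - 4 * Sp τ * Ap τ - 4 * Dl τ * Np τ) τ :=
  h.ev_St τ ▸ (h.diff_St τ).hasDerivAt

lemma bb_hdAp (h : BianchiB γ κ Sp St Dl Ap Np) (τ : ℝ) :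
    HasDerivAt Ap (2*(qF γ κ Sp St Ap Np τ + 2*Sp τ) * Ap τ) τ :=
  h.ev_Ap τ ▸ (h.diff_Ap τ).hasDerivAt

lemma bb_hdNp (h : BianchiB γ κ Sp St Dl Ap Np) (τ : ℝ) :
    HasDerivAt Np ((qF γ κ Sp St Ap Np τ + 2*Sp τ) * Np τ + 6 * Dl τ) τ :=
  h.ev_Np τ ▸ (h.diff_Np τ).hasDerivAt

lemma bb_hdNT (h : BianchiB γ κ Sp St Dl Ap Np) (τ : ℝ) :
    HasDerivAt (NT κ Ap Np)
      (2*(qF γ κ Sp St Ap Np τ + 2*Sp τ) * NT κ Ap Np τ + 4 * Dl τ * Np τ) τ := by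
  have h1 : HasDerivAt (fun τ => (1/3 : ℝ) * ((Np τ)^2 - κ * Ap τ))
      ((1/3) * (2 * Np τ ^ 1 * ((qF γ κ Sp St Ap Np τ + 2*Sp τ) * Np τ + 6 * Dl τ)
        - κ * (2*(qF γ κ Sp St Ap Np τ + 2*Sp τ) * Ap τ))) τ :=
    (((bb_hdNp h τ).pow 2).sub ((bb_hdAp h τ).const_mul κ)).const_mul (1/3)
  have h2 : NT κ Ap Np = fun τ => (1/3 : ℝ) * ((Np τ)^2 - κ * Ap τ) := rfl
  rw [h2]
  convert h1 using 1
  simp only [NT]; ring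

lemma bb_hdOm (h : BianchiB γ κ Sp St Dl Ap Np) (τ : ℝ) :
    HasDerivAt (OmF κ Sp St Ap Np)
      ((2 * qF γ κ Sp St Ap Np τ - (3*γ-2)) * OmF κ Sp St Ap Np τ) τ := by
  have h2 : OmF κ Sp St Ap Np = fun τ =>
      1 - (Sp τ)^2 - St τ - Ap τ - NT κ Ap Np τ := rfl
  have h1 : HasDerivAt (fun τ => 1 - (Sp τ)^2 - St τ - Ap τ - NT κ Ap Np τ)
      (0 - 2 * Sp τ ^ 1 * ((qF γ κ Sp St Ap Np τ - 2) * Sp τ - 2 * NT κ Ap Np τ)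
        - (2*(qF γ κ Sp St Ap Np τ - 2) * St τ - 4 * Sp τ * Ap τ - 4 * Dl τ * Np τ)
        - 2*(qF γ κ Sp St Ap Np τ + 2*Sp τ) * Ap τ
        - (2*(qF γ κ Sp St Ap Np τ + 2*Sp τ) * NT κ Ap Np τ + 4 * Dl τ * Np τ)) τ :=
    ((((hasDerivAt_const τ (1:ℝ)).sub ((bb_hdSp h τ).pow 2)).sub (bb_hdSt h τ)).sub
      (bb_hdAp h τ)).sub (bb_hdNT h τ)
  rw [h2]
  convert h1 using 1
  simp only [qF, OmF, NT]; ring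

/-- Derivative of `G₁ = Ã - (1+Σ₊)²`. -/
lemma bb_hdG1 (h : BianchiB γ κ Sp St Dl Ap Np) (τ : ℝ) :
    HasDerivAt (fun τ => Ap τ - (1 + Sp τ)^2)
      (((3*γ-2)*(Ap τ - Sp τ - (Sp τ)^2) + 4*Sp τ + 4*(Sp τ)^2) * OmF κ Sp St Ap Np τ
        + 4 * EFt κ Sp St Ap Np τ) τ := by
  have h1 : HasDerivAt (fun τ => Ap τ - (1 + Sp τ)^2)
      (2*(qF γ κ Sp St Ap Np τ + 2*Sp τ) * Ap τ
        - 2 * (1 + Sp τ) ^ 1 * (0 + ((qF γ κ Sp St Ap Np τ - 2) * Sp τ - 2 * NT κ Ap Np τ))) τ :=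
    (bb_hdAp h τ).sub (((hasDerivAt_const τ (1:ℝ)).add (bb_hdSp h τ)).pow 2)
  convert h1 using 1
  simp only [qF, OmF, NT, EFt]; ring

/-- Derivative of `E` along the solution. -/
lemma bb_hdEF (h : BianchiB γ κ Sp St Dl Ap Np) (τ : ℝ) :
    HasDerivAt (EFt κ Sp St Ap Np)
      (2*(1+Sp τ)*((qF γ κ Sp St Ap Np τ - 2) * Sp τ - 2 * NT κ Ap Np τ) * NT κ Ap Np τ
        + (1+Sp τ)^2 * (2*(qF γ κ Sp St Ap Np τ + 2*Sp τ) * NT κ Ap Np τ + 4 * Dl τ * Np τ)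
        + (2*((qF γ κ Sp St Ap Np τ - 2) * Sp τ - 2 * NT κ Ap Np τ)*(1+2*Sp τ)
            + (2*(qF γ κ Sp St Ap Np τ - 2) * St τ - 4 * Sp τ * Ap τ - 4 * Dl τ * Np τ)) * Ap τ
        + (2*Sp τ*(1+Sp τ) + St τ) * (2*(qF γ κ Sp St Ap Np τ + 2*Sp τ) * Ap τ)) τ := by
  have hS := bb_hdSp h τ
  have h1 : HasDerivAt (fun τ => (1 + Sp τ)^2 * NT κ Ap Np τ
      + (2*Sp τ*(1+Sp τ) + St τ) * Ap τ)
      ((2 * (1 + Sp τ) ^ 1 * (0 + ((qF γ κ Sp St Ap Np τ - 2) * Sp τ - 2 * NT κ Ap Np τ)))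
          * NT κ Ap Np τ
        + (1 + Sp τ)^2 * (2*(qF γ κ Sp St Ap Np τ + 2*Sp τ) * NT κ Ap Np τ + 4 * Dl τ * Np τ)
        + (((2*((qF γ κ Sp St Ap Np τ - 2) * Sp τ - 2 * NT κ Ap Np τ)) * (1 + Sp τ)
            + (2*Sp τ) * (0 + ((qF γ κ Sp St Ap Np τ - 2) * Sp τ - 2 * NT κ Ap Np τ))
            + (2*(qF γ κ Sp St Ap Np τ - 2) * St τ - 4 * Sp τ * Ap τ - 4 * Dl τ * Np τ)) * Ap τ
          + (2*Sp τ*(1+Sp τ) + St τ) * (2*(qF γ κ Sp St Ap Np τ + 2*Sp τ) * Ap τ))) τ := by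
    exact ((((hasDerivAt_const τ (1:ℝ)).add hS).pow 2).mul (bb_hdNT h τ)).add
      ((((hS.const_mul 2).mul ((hasDerivAt_const τ (1:ℝ)).add hS)).add (bb_hdSt h τ)).mul
        (bb_hdAp h τ))
  have h2 : EFt κ Sp St Ap Np = fun τ => (1 + Sp τ)^2 * NT κ Ap Np τ
      + (2*Sp τ*(1+Sp τ) + St τ) * Ap τ := rfl
  rw [h2]
  convert h1 using 1
  ring

end auxiliary
section bounds

variable {γ κ : ℝ} {Sp St Dl Ap Np : ℝ → ℝ}

lemma bb_Om_nonneg (h : BianchiB γ κ Sp St Dl Ap Np) (τ : ℝ) :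
    0 ≤ OmF κ Sp St Ap Np τ := by
  have := h.con_sum τ
  simp only [OmF]; linarith

lemma bb_Om_le_one (h : BianchiB γ κ Sp St Dl Ap Np) (τ : ℝ) :
    OmF κ Sp St Ap Np τ ≤ 1 := by
  have h1 := h.con_St τ
  have h2 := h.con_Ap τ
  have h3 := h.con_NT τ
  have h4 := sq_nonneg (Sp τ)
  simp only [OmF]; linarith

lemma bb_Sp_bound (h : BianchiB γ κ Sp St Dl Ap Np) (τ : ℝ) :
    -1 ≤ Sp τ ∧ Sp τ ≤ 1 := by
  have h1 := h.con_St τ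
  have h2 := h.con_Ap τ
  have h3 := h.con_NT τ
  have h4 := h.con_sum τ
  have h5 : (Sp τ)^2 ≤ 1 := by linarith
  exact abs_le.mp ((sq_le_one_iff_abs_le_one (Sp τ)).mp h5)

lemma bb_St_le_one (h : BianchiB γ κ Sp St Dl Ap Np) (τ : ℝ) : St τ ≤ 1 := by
  have h2 := h.con_Ap τ
  have h3 := h.con_NT τ
  have h4 := h.con_sum τ
  have h5 := sq_nonneg (Sp τ)
  linarith

lemma bb_Ap_le_one (h : BianchiB γ κ Sp St Dl Ap Np) (τ : ℝ) : Ap τ ≤ 1 := by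
  have h2 := h.con_St τ
  have h3 := h.con_NT τ
  have h4 := h.con_sum τ
  have h5 := sq_nonneg (Sp τ)
  linarith

lemma bb_NT_le_one (h : BianchiB γ κ Sp St Dl Ap Np) (τ : ℝ) : NT κ Ap Np τ ≤ 1 := by
  have h2 := h.con_St τ
  have h3 := h.con_Ap τ
  have h4 := h.con_sum τ
  have h5 := sq_nonneg (Sp τ)
  linarith

lemma bb_Dl_bound (h : BianchiB γ κ Sp St Dl Ap Np) (τ : ℝ) :
    -1 ≤ Dl τ ∧ Dl τ ≤ 1 := by
  have h1 := h.con_main τ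
  have h2 : (Dl τ)^2 ≤ 1 := by
    have h3 := mul_le_one₀ (bb_St_le_one h τ) (h.con_NT τ) (bb_NT_le_one h τ)
    have h4 := mul_nonneg (sq_nonneg (Sp τ)) (h.con_Ap τ)
    nlinarith [h1]
  exact abs_le.mp ((sq_le_one_iff_abs_le_one (Dl τ)).mp h2)

lemma bb_Np_bound (h : BianchiB γ κ Sp St Dl Ap Np) (τ : ℝ) :
    -(2 + |κ|) ≤ Np τ ∧ Np τ ≤ 2 + |κ| := by
  have h1 : (Np τ)^2 = 3 * NT κ Ap Np τ + κ * Ap τ := by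
    simp only [NT]; ring
  have h2 : κ * Ap τ ≤ |κ| := by
    calc κ * Ap τ ≤ |κ * Ap τ| := le_abs_self _
    _ = |κ| * |Ap τ| := abs_mul κ (Ap τ)
    _ ≤ |κ| * 1 := by
        apply mul_le_mul_of_nonneg_left _ (abs_nonneg κ)
        rw [abs_of_nonneg (h.con_Ap τ)]
        exact bb_Ap_le_one h τ
    _ = |κ| := mul_one _
  have h3 : (Np τ)^2 ≤ (2 + |κ|)^2 := by
    have h5 := bb_NT_le_one h τ
    nlinarith [abs_nonneg κ, sq_abs κ]
  exact abs_le_of_sq_le_sq' h3 (by positivity)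

lemma bb_q_bound (h : BianchiB γ κ Sp St Dl Ap Np) (hγ0 : 0 ≤ γ) (hγ1 : γ ≤ 2/3) (τ : ℝ) :
    -1 ≤ qF γ κ Sp St Ap Np τ ∧ qF γ κ Sp St Ap Np τ ≤ 3 := by
  have h1 := h.con_St τ
  have h2 := h.con_Ap τ
  have h3 := h.con_NT τ
  have h4 := h.con_sum τ
  have h5 := sq_nonneg (Sp τ)
  have hST1 : (Sp τ)^2 + St τ ≤ 1 := by linarith
  have hAN0 : 0 ≤ 1 - Ap τ - NT κ Ap Np τ := by linarith
  have hAN1 : 1 - Ap τ - NT κ Ap Np τ ≤ 1 := by linarith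
  constructor
  · simp only [qF]
    nlinarith [mul_nonneg (by linarith : (0:ℝ) ≤ 3/2*(2-γ)) (by linarith : (0:ℝ) ≤ (Sp τ)^2 + St τ),
      mul_le_mul (by linarith : (2:ℝ)-3*γ ≤ 2) hAN1 hAN0 (by norm_num)]
  · simp only [qF]
    nlinarith [mul_le_mul (by linarith : (3:ℝ)/2*(2-γ) ≤ 3) hST1 (by linarith) (by norm_num),
      mul_nonneg (by linarith : (0:ℝ) ≤ 2-3*γ) hAN0]

lemma bb_EF_nonneg (h : BianchiB γ κ Sp St Dl Ap Np) (τ : ℝ) :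
    0 ≤ EFt κ Sp St Ap Np τ :=
  E_nonneg (Sp τ) (St τ) (Dl τ) (Ap τ) (NT κ Ap Np τ) (h.con_St τ) (h.con_Ap τ)
    (h.con_NT τ) (h.con_main τ)

end bounds
section dynamics

variable {γ κ : ℝ} {Sp St Dl Ap Np : ℝ → ℝ}

lemma monoOn_Iic {f f' : ℝ → ℝ} {b : ℝ} (hder : ∀ x ∈ Set.Iic b, HasDerivAt f (f' x) x)
    (hnn : ∀ x ∈ Set.Iic b, 0 ≤ f' x) : MonotoneOn f (Set.Iic b) := by
  apply monotoneOn_of_deriv_nonneg (convex_Iic b)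
  · exact fun x hx => (hder x hx).continuousAt.continuousWithinAt
  · exact fun x hx =>
      ((hder x (interior_subset hx)).differentiableAt).differentiableWithinAt
  · intro x hx
    rw [(hder x (interior_subset hx)).deriv]
    exact hnn x (interior_subset hx)

lemma bb_factor (τ : ℝ) : 2 * qF γ κ Sp St Ap Np τ - (3*γ-2)
    = 4*((Sp τ)^2 + St τ) + (3*γ-2)*(OmF κ Sp St Ap Np τ - 1) := by
  simp only [qF, OmF, NT]; ring

lemma bb_Om_mono (h : BianchiB γ κ Sp St Dl Ap Np) (hγ1 : γ ≤ 2/3) :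
    Monotone (OmF κ Sp St Ap Np) := by
  apply monotone_of_deriv_nonneg
  · exact fun τ => (bb_hdOm h τ).differentiableAt
  · intro τ
    rw [(bb_hdOm h τ).deriv]
    have hfac : 0 ≤ 2 * qF γ κ Sp St Ap Np τ - (3*γ-2) := by
      rw [bb_factor]
      have h1 := h.con_St τ
      have h2 := sq_nonneg (Sp τ)
      have h3 := bb_Om_le_one h τ
      nlinarith [mul_nonneg (by linarith : (0:ℝ) ≤ 2-3*γ)
        (by linarith : (0:ℝ) ≤ 1 - OmF κ Sp St Ap Np τ)]
    exact mul_nonneg hfac (bb_Om_nonneg h τ)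

lemma bb_Om_tendsto (h : BianchiB γ κ Sp St Dl Ap Np) (hγ0 : 0 ≤ γ) (hγlt : γ < 2/3)
    (hpos : ∀ τ, 0 < OmF κ Sp St Ap Np τ) (T₀ : ℝ) (hT₀ : OmF κ Sp St Ap Np T₀ < 1) :
    Tendsto (OmF κ Sp St Ap Np) atBot (𝓝 0) := by
  have hmono := bb_Om_mono h (le_of_lt hγlt)
  have hbdd : BddBelow (Set.range (OmF κ Sp St Ap Np)) := by
    refine ⟨0, ?_⟩
    rintro x ⟨τ, rfl⟩
    exact (hpos τ).le
  have htend := tendsto_atBot_ciInf hmono hbdd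
  have hω0 : 0 ≤ ⨅ τ, OmF κ Sp St Ap Np τ := le_ciInf fun τ => (hpos τ).le
  rcases eq_or_lt_of_le hω0 with hzero | hωpos
  · rwa [← hzero] at htend
  · exfalso
    set ω := ⨅ τ, OmF κ Sp St Ap Np τ with hωdef
    set c₀ : ℝ := (2-3*γ)*(1 - OmF κ Sp St Ap Np T₀) with hc₀def
    have hc₀pos : 0 < c₀ := by
      apply mul_pos (by linarith)
      linarith
    have hωle : ∀ τ, ω ≤ OmF κ Sp St Ap Np τ := fun τ => ciInf_le hbdd τ
    -- V τ = Om τ - c₀ ω τ is monotone on Iic T₀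
    have hmonoV : MonotoneOn (fun τ => OmF κ Sp St Ap Np τ - c₀*ω*τ) (Set.Iic T₀) := by
      apply monoOn_Iic (f' := fun τ =>
        (2 * qF γ κ Sp St Ap Np τ - (3*γ-2)) * OmF κ Sp St Ap Np τ - c₀*ω)
      · intro x _
        have hid : HasDerivAt (fun τ : ℝ => c₀*ω*τ) (c₀*ω) x := by
          simpa using (hasDerivAt_id x).const_mul (c₀*ω)
        exact (bb_hdOm h x).sub hid
      · intro x hx
        have hfac : c₀ ≤ 2 * qF γ κ Sp St Ap Np x - (3*γ-2) := by
          rw [bb_factor]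
          have h1 := h.con_St x
          have h2 := sq_nonneg (Sp x)
          have h3 : OmF κ Sp St Ap Np x ≤ OmF κ Sp St Ap Np T₀ := hmono hx
          nlinarith [mul_le_mul_of_nonneg_left
            (by linarith : 1 - OmF κ Sp St Ap Np T₀ ≤ 1 - OmF κ Sp St Ap Np x)
            (by linarith : (0:ℝ) ≤ 2-3*γ)]
        have hprod : c₀*ω ≤ (2 * qF γ κ Sp St Ap Np x - (3*γ-2)) * OmF κ Sp St Ap Np x :=
          mul_le_mul hfac (hωle x) hω0 (by linarith)
        linarith
    set τ₂ : ℝ := T₀ - (OmF κ Sp St Ap Np T₀)/(c₀*ω) - 1 with hτ₂def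
    have hτ₂le : τ₂ ≤ T₀ := by
      rw [hτ₂def]
      have : 0 < (OmF κ Sp St Ap Np T₀)/(c₀*ω) := div_pos (hpos T₀) (mul_pos hc₀pos hωpos)
      linarith
    have hV : OmF κ Sp St Ap Np τ₂ - c₀*ω*τ₂ ≤ OmF κ Sp St Ap Np T₀ - c₀*ω*T₀ :=
      hmonoV hτ₂le (le_refl T₀ : T₀ ∈ Set.Iic T₀) hτ₂le
    have hcalc : c₀*ω*τ₂ = c₀*ω*T₀ - OmF κ Sp St Ap Np T₀ - c₀*ω := by
      rw [hτ₂def]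
      have hne : c₀*ω ≠ 0 := ne_of_gt (mul_pos hc₀pos hωpos)
      field_simp
    have := hpos τ₂
    nlinarith [mul_pos hc₀pos hωpos]

lemma abs_mul_le {x y a b : ℝ} (hx : |x| ≤ a) (hy : |y| ≤ b) : |x*y| ≤ a*b := by
  rw [abs_mul]
  exact mul_le_mul hx hy (abs_nonneg y) (le_trans (abs_nonneg x) hx)

lemma bb_c_lower (h : BianchiB γ κ Sp St Dl Ap Np) (hγ0 : 0 ≤ γ) (hγ1 : γ ≤ 2/3) (τ : ℝ) :
    -20 ≤ (3*γ-2)*(Ap τ - Sp τ - (Sp τ)^2) + 4*Sp τ + 4*(Sp τ)^2 := by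
  obtain ⟨hS1, hS2⟩ := bb_Sp_bound h τ
  have hA0 := h.con_Ap τ
  have hA1 := bb_Ap_le_one h τ
  have hsq : (Sp τ)^2 ≤ 1 := by nlinarith
  have hX2 : Ap τ - Sp τ - (Sp τ)^2 ≤ 2 := by nlinarith [sq_nonneg (Sp τ)]
  have h3γ : 3*γ-2 ≤ 0 := by linarith
  have hmul := mul_le_mul_of_nonpos_left hX2 h3γ
  nlinarith [sq_nonneg (Sp τ)]

end dynamics
section efdbound

/-- Explicit formula for the derivative of `E` along the solution. -/
noncomputable def EFd (γ κ : ℝ) (Sp St Dl Ap Np : ℝ → ℝ) (τ : ℝ) : ℝ :=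
  2*(1+Sp τ)*((qF γ κ Sp St Ap Np τ - 2) * Sp τ - 2 * NT κ Ap Np τ) * NT κ Ap Np τ
    + (1+Sp τ)^2 * (2*(qF γ κ Sp St Ap Np τ + 2*Sp τ) * NT κ Ap Np τ + 4 * Dl τ * Np τ)
    + (2*((qF γ κ Sp St Ap Np τ - 2) * Sp τ - 2 * NT κ Ap Np τ)*(1+2*Sp τ)
        + (2*(qF γ κ Sp St Ap Np τ - 2) * St τ - 4 * Sp τ * Ap τ - 4 * Dl τ * Np τ)) * Ap τ
    + (2*Sp τ*(1+Sp τ) + St τ) * (2*(qF γ κ Sp St Ap Np τ + 2*Sp τ) * Ap τ)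

variable {γ κ : ℝ} {Sp St Dl Ap Np : ℝ → ℝ}

lemma bb_hdEF' (h : BianchiB γ κ Sp St Dl Ap Np) (τ : ℝ) :
    HasDerivAt (EFt κ Sp St Ap Np) (EFd γ κ Sp St Dl Ap Np τ) τ := by
  simpa only [EFd] using bb_hdEF h τ

lemma abs_sub_le' (a b : ℝ) : |a - b| ≤ |a| + |b| := by
  rw [sub_eq_add_neg]
  exact (abs_add_le a (-b)).trans (by rw [abs_neg])

lemma bb_EFd_bound (h : BianchiB γ κ Sp St Dl Ap Np) (hγ0 : 0 ≤ γ) (hγ1 : γ ≤ 2/3) (τ : ℝ) :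
    |EFd γ κ Sp St Dl Ap Np τ| ≤ 300 + 20*|κ| := by
  obtain ⟨hS1, hS2⟩ := bb_Sp_bound h τ
  have hT0 := h.con_St τ
  have hT1 := bb_St_le_one h τ
  have hA0 := h.con_Ap τ
  have hA1 := bb_Ap_le_one h τ
  have hNn0 := h.con_NT τ
  have hNn1 := bb_NT_le_one h τ
  obtain ⟨hD1, hD2⟩ := bb_Dl_bound h τ
  obtain ⟨hN1, hN2⟩ := bb_Np_bound h τ
  obtain ⟨hq1, hq2⟩ := bb_q_bound h hγ0 hγ1 τ
  rw [EFd]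
  set S := Sp τ with hSdef
  set T := St τ with hTdef
  set D := Dl τ with hDdef
  set A := Ap τ with hAdef
  set N := Np τ with hNdef
  set Nn := NT κ Ap Np τ with hNndef
  set q := qF γ κ Sp St Ap Np τ with hqdef
  have a2 : |(2:ℝ)| ≤ 2 := by norm_num
  have a4 : |(4:ℝ)| ≤ 4 := by norm_num
  have aS : |S| ≤ 1 := abs_le.mpr ⟨hS1, hS2⟩
  have aT : |T| ≤ 1 := abs_le.mpr ⟨by linarith, hT1⟩
  have aA : |A| ≤ 1 := abs_le.mpr ⟨by linarith, hA1⟩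
  have aNn : |Nn| ≤ 1 := abs_le.mpr ⟨by linarith, hNn1⟩
  have aD : |D| ≤ 1 := abs_le.mpr ⟨hD1, hD2⟩
  have aN : |N| ≤ 2 + |κ| := abs_le.mpr ⟨hN1, hN2⟩
  have a1S : |1 + S| ≤ 2 := abs_le.mpr ⟨by linarith, by linarith⟩
  have a12S : |1 + 2*S| ≤ 3 := abs_le.mpr ⟨by linarith, by linarith⟩
  have aq2 : |q - 2| ≤ 3 := abs_le.mpr ⟨by linarith, by linarith⟩
  have aq2S : |q + 2*S| ≤ 5 := abs_le.mpr ⟨by linarith, by linarith⟩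
  -- derivative components
  have aS' : |(q - 2) * S - 2 * Nn| ≤ 5 := by
    have h1 := abs_sub_le' ((q - 2) * S) (2 * Nn)
    have h2 := abs_mul_le aq2 aS
    have h3 := abs_mul_le a2 aNn
    linarith
  have aT' : |2*(q - 2) * T - 4 * S * A - 4 * D * N| ≤ 10 + 4*(2 + |κ|) := by
    have h1 := abs_sub_le' (2*(q - 2) * T - 4 * S * A) (4 * D * N)
    have h2 := abs_sub_le' (2*(q - 2) * T) (4 * S * A)
    have h3 := abs_mul_le (abs_mul_le a2 aq2) aT
    have h4 := abs_mul_le (abs_mul_le a4 aS) aA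
    have h5 := abs_mul_le (abs_mul_le a4 aD) aN
    linarith [abs_nonneg κ]
  have aA' : |2*(q + 2*S) * A| ≤ 10 := by
    have h1 := abs_mul_le (abs_mul_le a2 aq2S) aA
    linarith
  have aNn' : |2*(q + 2*S) * Nn + 4 * D * N| ≤ 10 + 4*(2 + |κ|) := by
    have h1 := abs_add_le (2*(q + 2*S) * Nn) (4 * D * N)
    have h2 := abs_mul_le (abs_mul_le a2 aq2S) aNn
    have h3 := abs_mul_le (abs_mul_le a4 aD) aN
    linarith [abs_nonneg κ]
  have a1S2 : |(1 + S)^2| ≤ 4 := by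
    rw [abs_of_nonneg (sq_nonneg _), ← sq_abs]
    nlinarith [abs_nonneg (1+S)]
  -- the four terms
  have tb1 : |2*(1+S)*((q - 2) * S - 2 * Nn) * Nn| ≤ 20 := by
    have h1 := abs_mul_le (abs_mul_le (abs_mul_le a2 a1S) aS') aNn
    linarith
  have tb2 : |(1+S)^2 * (2*(q + 2*S) * Nn + 4 * D * N)| ≤ 4*(10 + 4*(2 + |κ|)) := by
    have h1 := abs_mul_le a1S2 aNn'
    linarith
  have tb3 : |(2*((q - 2) * S - 2 * Nn)*(1+2*S)
      + (2*(q - 2) * T - 4 * S * A - 4 * D * N)) * A| ≤ 40 + 4*(2 + |κ|) := by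
    have h1 := abs_add_le (2*((q - 2) * S - 2 * Nn)*(1+2*S)) (2*(q - 2) * T - 4 * S * A - 4 * D * N)
    have h2 := abs_mul_le (abs_mul_le a2 aS') a12S
    have h3 : |2*((q - 2) * S - 2 * Nn)*(1+2*S)
        + (2*(q - 2) * T - 4 * S * A - 4 * D * N)| ≤ 40 + 4*(2 + |κ|) := by linarith
    have h4 := abs_mul_le h3 aA
    linarith [abs_nonneg κ]
  have tb4 : |(2*S*(1+S) + T) * (2*(q + 2*S) * A)| ≤ 50 := by
    have h1 := abs_add_le (2*S*(1+S)) T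
    have h2 := abs_mul_le (abs_mul_le a2 aS) a1S
    have h3 : |2*S*(1+S) + T| ≤ 5 := by linarith
    have h4 := abs_mul_le h3 aA'
    linarith
  -- assemble
  have T1 := 2*(1+S)*((q - 2) * S - 2 * Nn) * Nn
  have hsplit := abs_add_le (2*(1+S)*((q - 2) * S - 2 * Nn) * Nn
      + (1+S)^2 * (2*(q + 2*S) * Nn + 4 * D * N)
      + (2*((q - 2) * S - 2 * Nn)*(1+2*S) + (2*(q - 2) * T - 4 * S * A - 4 * D * N)) * A)
    ((2*S*(1+S) + T) * (2*(q + 2*S) * A))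
  have hsplit2 := abs_add_le (2*(1+S)*((q - 2) * S - 2 * Nn) * Nn
      + (1+S)^2 * (2*(q + 2*S) * Nn + 4 * D * N))
    ((2*((q - 2) * S - 2 * Nn)*(1+2*S) + (2*(q - 2) * T - 4 * S * A - 4 * D * N)) * A)
  have hsplit3 := abs_add_le (2*(1+S)*((q - 2) * S - 2 * Nn) * Nn)
    ((1+S)^2 * (2*(q + 2*S) * Nn + 4 * D * N))
  linarith [abs_nonneg κ]

end efdbound
section helpers

lemma mono_tendsto_atBot {f : ℝ → ℝ} {T₁ m : ℝ} (hm : MonotoneOn f (Set.Iic T₁))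
    (hb : ∀ τ ≤ T₁, m ≤ f τ) : ∃ w, Tendsto f atBot (𝓝 w) := by
  have hgm : Monotone (fun τ => f (min τ T₁)) := fun a b hab =>
    hm (Set.mem_Iic.mpr (min_le_right a T₁)) (Set.mem_Iic.mpr (min_le_right b T₁))
      (min_le_min hab le_rfl)
  have hgb : BddBelow (Set.range (fun τ => f (min τ T₁))) := by
    refine ⟨m, ?_⟩
    rintro x ⟨τ, rfl⟩
    exact hb _ (min_le_right τ T₁)
  refine ⟨⨅ τ, f (min τ T₁), ?_⟩
  have h1 := tendsto_atBot_ciInf hgm hgb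
  apply h1.congr'
  filter_upwards [eventually_le_atBot T₁] with τ hτ
  rw [min_eq_left hτ]

variable {Sp St Dl Ap Np : ℝ → ℝ}

lemma traj_comp {t : ℕ → ℝ} {p : ℝ × ℝ × ℝ × ℝ × ℝ}
    (h : Tendsto (fun n => traj Sp St Dl Ap Np (t n)) atTop (𝓝 p)) :
    Tendsto (fun n => Sp (t n)) atTop (𝓝 p.1) ∧
    Tendsto (fun n => St (t n)) atTop (𝓝 p.2.1) ∧
    Tendsto (fun n => Dl (t n)) atTop (𝓝 p.2.2.1) ∧
    Tendsto (fun n => Ap (t n)) atTop (𝓝 p.2.2.2.1) ∧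
    Tendsto (fun n => Np (t n)) atTop (𝓝 p.2.2.2.2) := by
  refine ⟨?_, ?_, ?_, ?_, ?_⟩
  · exact (continuous_fst.tendsto p).comp h
  · exact ((continuous_fst.comp continuous_snd).tendsto p).comp h
  · exact ((continuous_fst.comp (continuous_snd.comp continuous_snd)).tendsto p).comp h
  · exact ((continuous_fst.comp (continuous_snd.comp
      (continuous_snd.comp continuous_snd))).tendsto p).comp h
  · exact ((continuous_snd.comp (continuous_snd.comp
      (continuous_snd.comp continuous_snd))).tendsto p).comp h

end helpers
theorem stmt1 (γ κ : ℝ) (Sp St Dl Ap Np : ℝ → ℝ)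
    (hsol : BianchiB γ κ Sp St Dl Ap Np)
    (hinf : Inflationary γ κ Sp St Ap Np) :
    (∀ p : ℝ × ℝ × ℝ × ℝ × ℝ, AlphaLimitPt Sp St Dl Ap Np p →
      p ∈ Kasner ∪ PlaneWave κ ∪ {(((0:ℝ), 0, 0, 0, 0) : ℝ × ℝ × ℝ × ℝ × ℝ)}) ∧
    (AlphaLimitPt Sp St Dl Ap Np (((0:ℝ), 0, 0, 0, 0) : ℝ × ℝ × ℝ × ℝ × ℝ) →
      ∀ τ, traj Sp St Dl Ap Np τ = (((0:ℝ), 0, 0, 0, 0) : ℝ × ℝ × ℝ × ℝ × ℝ)) ∧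
    ¬ ((∃ p : ℝ × ℝ × ℝ × ℝ × ℝ, p ∈ Kasner ∧
          p ≠ (((-1:ℝ), 0, 0, 0, 0) : ℝ × ℝ × ℝ × ℝ × ℝ) ∧ AlphaLimitPt Sp St Dl Ap Np p) ∧
       (∃ p ∈ PlaneWave κ, AlphaLimitPt Sp St Dl Ap Np p)) := by
  obtain ⟨hpos, hγ0, hγlt⟩ := hinf
  have hγ1 : γ ≤ 2/3 := le_of_lt hγlt
  by_cases hcase : ∀ τ, OmF κ Sp St Ap Np τ = 1
  · -- Case 1 : Ω ≡ 1, the solution is constantly at the origin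
    have hzero : ∀ τ, traj Sp St Dl Ap Np τ = (((0:ℝ), 0, 0, 0, 0) : ℝ × ℝ × ℝ × ℝ × ℝ) := by
      intro τ
      have h1 := hsol.con_St τ
      have h2 := hsol.con_Ap τ
      have h3 := hsol.con_NT τ
      have hsq := sq_nonneg (Sp τ)
      have hsum0 : (Sp τ)^2 + St τ + Ap τ + NT κ Ap Np τ = 0 := by
        have h4 := hcase τ
        simp only [OmF] at h4
        linarith
      have hT : St τ = 0 := by linarith
      have hA : Ap τ = 0 := by linarith
      have hNn : NT κ Ap Np τ = 0 := by linarith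
      have hS : Sp τ = 0 := by
        have h5 : (Sp τ)^2 = 0 := by linarith
        exact pow_eq_zero_iff (n := 2) (by norm_num) |>.mp h5
      have hN : Np τ = 0 := by
        have h5 : (1/3 : ℝ) * ((Np τ)^2 - κ * Ap τ) = 0 := hNn
        have h6 : (Np τ)^2 = 0 := by rw [hA] at h5; linarith
        exact pow_eq_zero_iff (n := 2) (by norm_num) |>.mp h6
      have hD : Dl τ = 0 := by
        have h7 := hsol.con_main τ
        have h8 : (Dl τ)^2 = 0 := by rw [hT, hA] at h7; linarith [h7]
        exact pow_eq_zero_iff (n := 2) (by norm_num) |>.mp h8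
      simp only [traj, hS, hT, hD, hA, hN]
    refine ⟨?_, fun _ => hzero, ?_⟩
    · intro p hp
      obtain ⟨t, ht, hlim⟩ := hp
      have hconst : Tendsto (fun n => traj Sp St Dl Ap Np (t n)) atTop
          (𝓝 (((0:ℝ), 0, 0, 0, 0) : ℝ × ℝ × ℝ × ℝ × ℝ)) := by
        simp only [hzero]
        exact tendsto_const_nhds
      have hp0 : p = (((0:ℝ), 0, 0, 0, 0) : ℝ × ℝ × ℝ × ℝ × ℝ) :=
        tendsto_nhds_unique hlim hconst
      exact Or.inr hp0
    · rintro ⟨⟨pk, hK, hne, hpk⟩, _⟩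
      obtain ⟨t, ht, hlim⟩ := hpk
      have hconst : Tendsto (fun n => traj Sp St Dl Ap Np (t n)) atTop
          (𝓝 (((0:ℝ), 0, 0, 0, 0) : ℝ × ℝ × ℝ × ℝ × ℝ)) := by
        simp only [hzero]
        exact tendsto_const_nhds
      have hp0 : pk = (((0:ℝ), 0, 0, 0, 0) : ℝ × ℝ × ℝ × ℝ × ℝ) :=
        tendsto_nhds_unique hlim hconst
      obtain ⟨s, _, heq⟩ := hK
      rw [hp0] at heq
      simp only [Prod.mk.injEq] at heq
      obtain ⟨h1, h2, _⟩ := heq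
      nlinarith [h1, h2]
  · -- Case 2 : ∃ T₀ with Ω(T₀) < 1
    push_neg at hcase
    obtain ⟨T₀, hT₀⟩ := hcase
    have hT₀lt : OmF κ Sp St Ap Np T₀ < 1 := lt_of_le_of_ne (bb_Om_le_one hsol T₀) hT₀
    have hOm0 : Tendsto (OmF κ Sp St Ap Np) atBot (𝓝 0) :=
      bb_Om_tendsto hsol hγ0 hγlt hpos T₀ hT₀lt
    obtain ⟨T₁, hT₁⟩ := (hOm0.eventually (eventually_lt_nhds
      (by norm_num : (0:ℝ) < 1/2))).exists
    have hOmhalf : ∀ τ ≤ T₁, OmF κ Sp St Ap Np τ ≤ 1/2 := fun τ hτ =>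
      le_trans (bb_Om_mono hsol hγ1 hτ) (le_of_lt hT₁)
    have hc₁pos : 0 < (2-3*γ)/2 := by linarith
    have hfaclow : ∀ τ, τ ≤ T₁ → (2-3*γ)/2 ≤ 2*qF γ κ Sp St Ap Np τ - (3*γ-2) := by
      intro τ hτ
      rw [bb_factor]
      have h1 := hsol.con_St τ
      have h2 := sq_nonneg (Sp τ)
      have h3 := hOmhalf τ hτ
      nlinarith [mul_le_mul_of_nonneg_left
        (by linarith : (1:ℝ)/2 ≤ 1 - OmF κ Sp St Ap Np τ)
        (by linarith : (0:ℝ) ≤ 2-3*γ)]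
    -- exponential decay of Ω
    have hexp : ∀ τ ≤ T₁, OmF κ Sp St Ap Np τ
        ≤ OmF κ Sp St Ap Np T₁ * Real.exp ((2-3*γ)/2*(τ - T₁)) := by
      intro τ hτ
      have hmonoG : MonotoneOn
          (fun u => OmF κ Sp St Ap Np u * Real.exp (-((2-3*γ)/2*u))) (Set.Iic T₁) := by
        apply monoOn_Iic (f' := fun x =>
          ((2*qF γ κ Sp St Ap Np x - (3*γ-2)) * OmF κ Sp St Ap Np x)
            * Real.exp (-((2-3*γ)/2*x))
          + OmF κ Sp St Ap Np x * (Real.exp (-((2-3*γ)/2*x)) * -((2-3*γ)/2)))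
        · intro x _
          have hnegl : HasDerivAt (fun u : ℝ => -((2-3*γ)/2*u)) (-((2-3*γ)/2)) x := by
            simpa using ((hasDerivAt_id x).const_mul ((2-3*γ)/2)).fun_neg
          exact (bb_hdOm hsol x).mul hnegl.exp
        · intro x hx
          have h1 := hfaclow x hx
          have h2 := bb_Om_nonneg hsol x
          have h3 := (Real.exp_pos (-((2-3*γ)/2*x))).le
          have h4 : ((2*qF γ κ Sp St Ap Np x - (3*γ-2)) * OmF κ Sp St Ap Np x)
                * Real.exp (-((2-3*γ)/2*x))
              + OmF κ Sp St Ap Np x * (Real.exp (-((2-3*γ)/2*x)) * -((2-3*γ)/2))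
              = ((2*qF γ κ Sp St Ap Np x - (3*γ-2)) - (2-3*γ)/2)
                * (OmF κ Sp St Ap Np x * Real.exp (-((2-3*γ)/2*x))) := by ring
          rw [h4]
          exact mul_nonneg (by linarith) (mul_nonneg h2 h3)
      have h5 := hmonoG (Set.mem_Iic.mpr hτ) (Set.mem_Iic.mpr (le_refl T₁)) hτ
      simp only at h5
      have h6 := mul_le_mul_of_nonneg_right h5 (Real.exp_pos ((2-3*γ)/2*τ)).le
      calc OmF κ Sp St Ap Np τ
          = OmF κ Sp St Ap Np τ * Real.exp (-((2-3*γ)/2*τ)) * Real.exp ((2-3*γ)/2*τ) := by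
            rw [mul_assoc, ← Real.exp_add]; simp
        _ ≤ OmF κ Sp St Ap Np T₁ * Real.exp (-((2-3*γ)/2*T₁)) * Real.exp ((2-3*γ)/2*τ) := h6
        _ = OmF κ Sp St Ap Np T₁ * Real.exp ((2-3*γ)/2*(τ - T₁)) := by
            rw [mul_assoc, ← Real.exp_add]; ring_nf
    -- the monotone function W
    set KK : ℝ := 20*(OmF κ Sp St Ap Np T₁)*Real.exp (-((2-3*γ)/2*T₁))/((2-3*γ)/2)
      with hKdef
    have hKnn : 0 ≤ KK := by
      rw [hKdef]
      have := (hpos T₁).le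
      positivity
    have hWder : ∀ τ, HasDerivAt (fun u => (Ap u - (1+Sp u)^2)
          + KK*Real.exp ((2-3*γ)/2*u))
        ((((3*γ-2)*(Ap τ - Sp τ - (Sp τ)^2) + 4*Sp τ + 4*(Sp τ)^2) * OmF κ Sp St Ap Np τ
          + 4 * EFt κ Sp St Ap Np τ) + KK*(Real.exp ((2-3*γ)/2*τ)*((2-3*γ)/2))) τ := by
      intro τ
      apply (bb_hdG1 hsol τ).add
      have h1 : HasDerivAt (fun u : ℝ => (2-3*γ)/2*u) ((2-3*γ)/2) τ := by
        simpa using (hasDerivAt_id τ).const_mul ((2-3*γ)/2)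
      exact h1.exp.const_mul KK
    have hWd4 : ∀ τ ≤ T₁, 4 * EFt κ Sp St Ap Np τ ≤
        (((3*γ-2)*(Ap τ - Sp τ - (Sp τ)^2) + 4*Sp τ + 4*(Sp τ)^2) * OmF κ Sp St Ap Np τ
          + 4 * EFt κ Sp St Ap Np τ) + KK*(Real.exp ((2-3*γ)/2*τ)*((2-3*γ)/2)) := by
      intro τ hτ
      have h1 := bb_c_lower hsol hγ0 hγ1 τ
      have h2 := bb_Om_nonneg hsol τ
      have h3 := hexp τ hτ
      have h4 : KK*(Real.exp ((2-3*γ)/2*τ)*((2-3*γ)/2))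
          = 20*(OmF κ Sp St Ap Np T₁)*Real.exp ((2-3*γ)/2*(τ - T₁)) := by
        have he : Real.exp (-((2-3*γ)/2*T₁)) * Real.exp ((2-3*γ)/2*τ)
            = Real.exp ((2-3*γ)/2*(τ - T₁)) := by
          rw [← Real.exp_add]; congr 1; ring
        rw [hKdef, ← he, div_mul_eq_mul_div, div_eq_iff (ne_of_gt hc₁pos)]
        ring
      have h5 := mul_le_mul_of_nonneg_right h1 h2
      linarith [h3, h4, h5]
    have hWmono : MonotoneOn (fun u => (Ap u - (1+Sp u)^2)
        + KK*Real.exp ((2-3*γ)/2*u)) (Set.Iic T₁) := by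
      apply monoOn_Iic (f' := fun τ =>
        (((3*γ-2)*(Ap τ - Sp τ - (Sp τ)^2) + 4*Sp τ + 4*(Sp τ)^2) * OmF κ Sp St Ap Np τ
          + 4 * EFt κ Sp St Ap Np τ) + KK*(Real.exp ((2-3*γ)/2*τ)*((2-3*γ)/2)))
      · exact fun x _ => hWder x
      · intro x hx
        have h1 := hWd4 x hx
        have h2 := bb_EF_nonneg hsol x
        linarith
    have hWbdd : ∀ τ ≤ T₁, -5 ≤ (Ap τ - (1+Sp τ)^2) + KK*Real.exp ((2-3*γ)/2*τ) := by
      intro τ _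
      have h1 := hsol.con_Ap τ
      obtain ⟨hs1, hs2⟩ := bb_Sp_bound hsol τ
      have h2 : (1+Sp τ)^2 ≤ 4 := by nlinarith
      have h3 : 0 ≤ KK*Real.exp ((2-3*γ)/2*τ) := mul_nonneg hKnn (Real.exp_pos _).le
      linarith
    obtain ⟨w, hWlim⟩ := mono_tendsto_atBot hWmono hWbdd
    have hexp0 : Tendsto (fun τ => KK*Real.exp ((2-3*γ)/2*τ)) atBot (𝓝 0) := by
      have h1 : Tendsto (fun τ : ℝ => (2-3*γ)/2*τ) atBot atBot :=
        Tendsto.const_mul_atBot hc₁pos tendsto_id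
      have h2 := (Real.tendsto_exp_atBot.comp h1).const_mul KK
      simpa using h2
    have hG1lim : Tendsto (fun τ => Ap τ - (1+Sp τ)^2) atBot (𝓝 w) := by
      have h1 := hWlim.sub hexp0
      simp only [sub_zero] at h1
      convert h1 using 2 with τ
      ring
    -- generic limit-point analysis
    have hmain : ∀ p : ℝ × ℝ × ℝ × ℝ × ℝ, AlphaLimitPt Sp St Dl Ap Np p →
        (p ∈ Kasner ∪ PlaneWave κ ∧ w = p.2.2.2.1 - (1+p.1)^2) := by
      intro p hp
      obtain ⟨t, ht, hlim⟩ := hp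
      obtain ⟨hS, hT, hD, hA, hN⟩ := traj_comp hlim
      have hNnlim : Tendsto (fun n => NT κ Ap Np (t n)) atTop
          (𝓝 ((1/3)*((p.2.2.2.2)^2 - κ*p.2.2.2.1))) := by
        have heq : (fun n => NT κ Ap Np (t n))
            = fun n => (1/3)*((Np (t n))^2 - κ*Ap (t n)) := rfl
        rw [heq]
        exact ((hN.pow 2).sub (hA.const_mul κ)).const_mul (1/3)
      have hOmlim2 : Tendsto (fun n => OmF κ Sp St Ap Np (t n)) atTop
          (𝓝 (1 - p.1^2 - p.2.1 - p.2.2.2.1 - (1/3)*((p.2.2.2.2)^2 - κ*p.2.2.2.1))) := by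
        have heq : (fun n => OmF κ Sp St Ap Np (t n)) = fun n =>
            1 - (Sp (t n))^2 - St (t n) - Ap (t n) - NT κ Ap Np (t n) := rfl
        rw [heq]
        exact (((tendsto_const_nhds.sub (hS.pow 2)).sub hT).sub hA).sub hNnlim
      have hOmp : 1 - p.1^2 - p.2.1 - p.2.2.2.1
          - (1/3)*((p.2.2.2.2)^2 - κ*p.2.2.2.1) = 0 :=
        tendsto_nhds_unique hOmlim2 (hOm0.comp ht)
      have hσ : 0 ≤ p.2.1 := ge_of_tendsto' hT (fun n => hsol.con_St (t n))
      have ha : 0 ≤ p.2.2.2.1 := ge_of_tendsto' hA (fun n => hsol.con_Ap (t n))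
      have hnt : 0 ≤ (1/3)*((p.2.2.2.2)^2 - κ*p.2.2.2.1) :=
        ge_of_tendsto' hNnlim (fun n => hsol.con_NT (t n))
      have hconlim : Tendsto (fun n => St (t n) * NT κ Ap Np (t n) - (Dl (t n))^2
          - (Sp (t n))^2 * Ap (t n)) atTop
          (𝓝 (p.2.1 * ((1/3)*((p.2.2.2.2)^2 - κ*p.2.2.2.1))
            - p.2.2.1^2 - p.1^2*p.2.2.2.1)) :=
        ((hT.mul hNnlim).sub (hD.pow 2)).sub ((hS.pow 2).mul hA)
      have hcon : p.2.1 * ((1/3)*((p.2.2.2.2)^2 - κ*p.2.2.2.1))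
          - p.2.2.1^2 - p.1^2*p.2.2.2.1 = 0 := by
        have h0 : Tendsto (fun n => St (t n) * NT κ Ap Np (t n) - (Dl (t n))^2
            - (Sp (t n))^2 * Ap (t n)) atTop (𝓝 0) := by
          have heq : (fun n => St (t n) * NT κ Ap Np (t n) - (Dl (t n))^2
              - (Sp (t n))^2 * Ap (t n)) = fun _ => (0:ℝ) :=
            funext fun n => hsol.con_main (t n)
          rw [heq]
          exact tendsto_const_nhds
        exact tendsto_nhds_unique hconlim h0
      have hEFlim : Tendsto (fun n => EFt κ Sp St Ap Np (t n)) atTop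
          (𝓝 ((1+p.1)^2 * ((1/3)*((p.2.2.2.2)^2 - κ*p.2.2.2.1))
            + (2*p.1*(1+p.1) + p.2.1) * p.2.2.2.1)) := by
        have heq : (fun n => EFt κ Sp St Ap Np (t n)) = fun n =>
            (1 + Sp (t n))^2 * NT κ Ap Np (t n)
              + (2*Sp (t n)*(1+Sp (t n)) + St (t n)) * Ap (t n) := rfl
        rw [heq]
        exact (((tendsto_const_nhds.add hS).pow 2).mul hNnlim).add
          ((((hS.const_mul 2).mul (tendsto_const_nhds.add hS)).add hT).mul hA)
      have hEple : (1+p.1)^2 * ((1/3)*((p.2.2.2.2)^2 - κ*p.2.2.2.1))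
          + (2*p.1*(1+p.1) + p.2.1) * p.2.2.2.1 ≤ 0 := by
        refine lasalle (B := 300 + 20*|κ|) (by positivity)
          (fun τ _ => hWder τ) hWd4 hWlim
          (fun τ _ => bb_hdEF' hsol τ)
          (fun τ _ => bb_EFd_bound hsol hγ0 hγ1 τ) t ht hEFlim
      have hEpge : (0:ℝ) ≤ (1+p.1)^2 * ((1/3)*((p.2.2.2.2)^2 - κ*p.2.2.2.1))
          + (2*p.1*(1+p.1) + p.2.1) * p.2.2.2.1 :=
        ge_of_tendsto' hEFlim (fun n => bb_EF_nonneg hsol (t n))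
      have hEp0 : (1+p.1)^2 * ((1/3)*((p.2.2.2.2)^2 - κ*p.2.2.2.1))
          + (2*p.1*(1+p.1) + p.2.1) * p.2.2.2.1 = 0 := le_antisymm hEple hEpge
      have hsum : p.1^2 + p.2.1 + p.2.2.2.1
          + (1/3)*((p.2.2.2.2)^2 - κ*p.2.2.2.1) = 1 := by linarith
      have hKP := algebra_classify κ p.1 p.2.1 p.2.2.1 p.2.2.2.1 p.2.2.2.2
        hσ ha hnt hsum hcon hEp0
      constructor
      · exact hKP
      · have hG1l2 : Tendsto (fun n => Ap (t n) - (1+Sp (t n))^2) atTop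
            (𝓝 (p.2.2.2.1 - (1+p.1)^2)) :=
          hA.sub ((tendsto_const_nhds.add hS).pow 2)
        exact tendsto_nhds_unique (hG1lim.comp ht) hG1l2
    refine ⟨?_, ?_, ?_⟩
    · intro p hp
      exact Or.inl (hmain p hp).1
    · intro h0
      exfalso
      obtain ⟨t, ht, hlim⟩ := h0
      obtain ⟨hS, hT, hD, hA, hN⟩ := traj_comp hlim
      have hOmlim2 : Tendsto (fun n => OmF κ Sp St Ap Np (t n)) atTop
          (𝓝 (1 - (0:ℝ)^2 - 0 - 0 - (1/3)*((0:ℝ)^2 - κ*0))) := by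
        have heq : (fun n => OmF κ Sp St Ap Np (t n))
            = fun n => 1 - (Sp (t n))^2 - St (t n) - Ap (t n)
              - (1/3)*((Np (t n))^2 - κ*Ap (t n)) := rfl
        rw [heq]
        exact ((((tendsto_const_nhds.sub (hS.pow 2)).sub hT).sub hA).sub
          (((hN.pow 2).sub (hA.const_mul κ)).const_mul (1/3)))
      have hOmlim1 : Tendsto (fun n => OmF κ Sp St Ap Np (t n)) atTop (𝓝 0) :=
        hOm0.comp ht
      have := tendsto_nhds_unique hOmlim2 hOmlim1
      norm_num at this
    · rintro ⟨⟨pk, hK, hne, hpk⟩, ⟨pp, hP, hpp⟩⟩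
      obtain ⟨hK', hwk⟩ := hmain pk hpk
      obtain ⟨_, hwp⟩ := hmain pp hpp
      obtain ⟨s, hsIcc, heqk⟩ := hK
      obtain ⟨s', n', hs', hn', heqp⟩ := hP
      rw [heqk] at hwk
      rw [heqp] at hwp
      simp only at hwk hwp
      -- hwk : w = 0 - (1+s)^2, hwp : w = (1+s')^2 - (1+s')^2
      have hsm1 : s = -1 := by nlinarith [hwk, hwp]
      apply hne
      rw [heqk, hsm1]
      norm_num
end

section
/- Let Γ be an inflationary solution of the Bianchi class B system. Then (Σ₊, Σ̃, Δ, Ã, N₊)(τ) → (0,0,0,0,0) as τ → +∞. -/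
open Real Filter Topology MeasureTheory

theorem stmt2 (γ κ : ℝ) (Sp St Dl Ap Np : ℝ → ℝ)
    (hsol : BianchiB γ κ Sp St Dl Ap Np)
    (hinf : Inflationary γ κ Sp St Ap Np) :
    Tendsto (traj Sp St Dl Ap Np) atTop (𝓝 (((0:ℝ), 0, 0, 0, 0) : ℝ × ℝ × ℝ × ℝ × ℝ)) := by
  obtain ⟨hpos, hγ0, hγlt⟩ := hinf
  set Om := OmF κ Sp St Ap Np with hOmdef
  have hcpos : (0:ℝ) < 2 - 3*γ := by linarith
  -- key derivative formula
  have hOmD : ∀ τ, HasDerivAt Om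
      ((2 * qF γ κ Sp St Ap Np τ - (3*γ-2)) * Om τ) τ := by
    intro τ
    have H := ((((hasDerivAt_const τ (1:ℝ)).sub ((hsol.diff_Sp τ).hasDerivAt.pow 2)).sub
        (hsol.diff_St τ).hasDerivAt).sub (hsol.diff_Ap τ).hasDerivAt).sub
        ((((hsol.diff_Np τ).hasDerivAt.pow 2).sub
          ((hsol.diff_Ap τ).hasDerivAt.const_mul κ)).const_mul (1/3))
    have H2 : HasDerivAt Om
        (0 - (2 * Sp τ ^ 1 * deriv Sp τ) - deriv St τ - deriv Ap τ
          - (1/3) * (2 * Np τ ^ 1 * deriv Np τ - κ * deriv Ap τ)) τ := by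
      refine (H.congr_deriv (by norm_num)).congr_of_eventuallyEq
        (Filter.Eventually.of_forall fun x => ?_)
      simp [hOmdef, OmF, NT]
    convert H2 using 1
    rw [hsol.ev_Sp τ, hsol.ev_St τ, hsol.ev_Ap τ, hsol.ev_Np τ]
    simp only [hOmdef, qF, NT, OmF]
    ring
  have hOmdiff : Differentiable ℝ Om := fun τ => (hOmD τ).differentiableAt
  -- 1 - Om = M ≥ 0, Om ≤ 1
  have hM0 : ∀ τ, 0 ≤ 1 - Om τ := by
    intro τ
    have h1 := hsol.con_St τ; have h2 := hsol.con_Ap τ; have h3 := hsol.con_NT τ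
    have h4 := sq_nonneg (Sp τ)
    simp only [hOmdef, OmF]; linarith
  have hOle1 : ∀ τ, Om τ ≤ 1 := fun τ => by linarith [hM0 τ]
  -- lower bound on the derivative
  have hkey : ∀ τ, (2 - 3*γ) * (1 - Om τ) * Om τ ≤ deriv Om τ := by
    intro τ
    rw [(hOmD τ).deriv]
    have hq : 2 * qF γ κ Sp St Ap Np τ - (3*γ-2)
        = 4*((Sp τ)^2 + St τ) + (2 - 3*γ) * (1 - Om τ) := by
      simp only [hOmdef, qF, OmF]; ring
    rw [hq]
    nlinarith [hpos τ, hsol.con_St τ, sq_nonneg (Sp τ)]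
  have hderiv0 : ∀ τ, 0 ≤ deriv Om τ := by
    intro τ
    refine le_trans ?_ (hkey τ)
    have := hpos τ; have := hM0 τ
    positivity
  have hmono : Monotone Om := monotone_of_deriv_nonneg hOmdiff hderiv0
  have hbdd : BddAbove (Set.range Om) := ⟨1, by rintro _ ⟨τ, rfl⟩; exact hOle1 τ⟩
  set L := ⨆ τ, Om τ with hLdef
  have htend : Tendsto Om atTop (𝓝 L) := tendsto_atTop_ciSup hmono hbdd
  have hleL : ∀ τ, Om τ ≤ L := fun τ => le_ciSup hbdd τ
  have hL1 : L ≤ 1 := ciSup_le hOle1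
  have hLeq : L = 1 := by
    by_contra hne
    have hLlt : L < 1 := lt_of_le_of_ne hL1 hne
    set K := (2 - 3*γ) * (1 - L) * Om 0 with hKdef
    have hKpos : 0 < K := by
      have := hpos 0
      have : (0:ℝ) < 1 - L := by linarith
      have := hpos 0
      positivity
    -- g = Om - K τ is monotone on [0, ∞)
    have hgD : ∀ x : ℝ, HasDerivAt (fun τ => Om τ - K * τ) (deriv Om x - K) x := by
      intro x
      exact (hOmdiff x).hasDerivAt.sub (by simpa using (hasDerivAt_id x).const_mul K)
    have hgmono : MonotoneOn (fun τ => Om τ - K * τ) (Set.Ici (0:ℝ)) := by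
      apply monotoneOn_of_deriv_nonneg (convex_Ici 0)
        (Continuous.continuousOn (hOmdiff.continuous.sub (continuous_const.mul continuous_id)))
        (fun x _ => (hgD x).differentiableAt.differentiableWithinAt)
      intro x hx
      show 0 ≤ deriv (fun τ => Om τ - K * τ) x
      rw [(hgD x).deriv]
      have hx0 : (0:ℝ) ≤ x := le_of_lt (by simpa using hx)
      have h1 : Om 0 ≤ Om x := hmono hx0
      have h2 : Om x ≤ L := hleL x
      have h3 := hkey x
      have h4 : K ≤ (2 - 3*γ) * (1 - Om x) * Om x := by
        rw [hKdef]
        have e1 : (0:ℝ) ≤ 1 - L := by linarith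
        have e2 : 1 - L ≤ 1 - Om x := by linarith
        have e3 : (0:ℝ) ≤ 1 - Om x := by linarith
        nlinarith [mul_le_mul_of_nonneg_right
            (mul_le_mul_of_nonneg_left e2 hcpos.le) (hpos 0).le,
          mul_le_mul_of_nonneg_left h1 (mul_nonneg hcpos.le e3)]
      linarith
    have hcontra := hgmono (Set.self_mem_Ici) (Set.mem_Ici.mpr (le_of_lt (by positivity : (0:ℝ) < 1/K))) (le_of_lt (by positivity : (0:ℝ) < 1/K))
    simp only [mul_zero, sub_zero] at hcontra
    rw [mul_one_div, div_self (ne_of_gt hKpos)] at hcontra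
    have := hOle1 (1/K)
    have := hpos 0
    linarith
  rw [hLeq] at htend
  -- M → 0
  have hM : Tendsto (fun τ => 1 - Om τ) atTop (𝓝 0) := by
    have := (tendsto_const_nhds (x := (1:ℝ)) (f := atTop)).sub htend
    simpa using this
  have hMsum : ∀ τ, 1 - Om τ = (Sp τ)^2 + St τ + Ap τ + NT κ Ap Np τ := by
    intro τ; simp only [hOmdef, OmF]; ring
  have hsqrtM : ∀ c : ℝ, Tendsto (fun τ => Real.sqrt (c * (1 - Om τ))) atTop (𝓝 0) := by
    intro c
    have h0 : Tendsto (fun τ => c * (1 - Om τ)) atTop (𝓝 0) := by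
      simpa using hM.const_mul c
    have h := (Real.continuous_sqrt.tendsto 0).comp h0
    simpa [Function.comp_def] using h
  -- individual limits
  have hSt0 : Tendsto St atTop (𝓝 0) := by
    apply squeeze_zero hsol.con_St (fun τ => ?_) hM
    rw [hMsum τ]
    nlinarith [sq_nonneg (Sp τ), hsol.con_Ap τ, hsol.con_NT τ]
  have hAp0 : Tendsto Ap atTop (𝓝 0) := by
    apply squeeze_zero hsol.con_Ap (fun τ => ?_) hM
    rw [hMsum τ]
    nlinarith [sq_nonneg (Sp τ), hsol.con_St τ, hsol.con_NT τ]
  have hNT0 : Tendsto (NT κ Ap Np) atTop (𝓝 0) := by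
    apply squeeze_zero hsol.con_NT (fun τ => ?_) hM
    rw [hMsum τ]
    nlinarith [sq_nonneg (Sp τ), hsol.con_St τ, hsol.con_Ap τ]
  have hSp0 : Tendsto Sp atTop (𝓝 0) := by
    apply squeeze_zero_norm (fun τ => ?_) (hsqrtM 1)
    rw [Real.norm_eq_abs, ← Real.sqrt_sq_eq_abs]
    apply Real.sqrt_le_sqrt
    rw [hMsum τ]
    nlinarith [hsol.con_St τ, hsol.con_Ap τ, hsol.con_NT τ]
  have hNp0 : Tendsto Np atTop (𝓝 0) := by
    apply squeeze_zero_norm (fun τ => ?_) (hsqrtM (3 + |κ|))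
    rw [Real.norm_eq_abs, ← Real.sqrt_sq_eq_abs]
    apply Real.sqrt_le_sqrt
    have hNTeq : (Np τ)^2 = 3 * NT κ Ap Np τ + κ * Ap τ := by simp only [NT]; ring
    have hκ : κ * Ap τ ≤ |κ| * Ap τ :=
      mul_le_mul_of_nonneg_right (le_abs_self κ) (hsol.con_Ap τ)
    have hNTle : NT κ Ap Np τ ≤ 1 - Om τ := by
      rw [hMsum τ]; nlinarith [sq_nonneg (Sp τ), hsol.con_St τ, hsol.con_Ap τ]
    have hAple : Ap τ ≤ 1 - Om τ := by
      rw [hMsum τ]; nlinarith [sq_nonneg (Sp τ), hsol.con_St τ, hsol.con_NT τ]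
    have habs : (0:ℝ) ≤ |κ| := abs_nonneg κ
    nlinarith
  have hDl0 : Tendsto Dl atTop (𝓝 0) := by
    apply squeeze_zero_norm (fun τ => ?_) hM
    have hc := hsol.con_main τ
    have h1 : St τ ≤ 1 - Om τ := by
      rw [hMsum τ]; nlinarith [sq_nonneg (Sp τ), hsol.con_Ap τ, hsol.con_NT τ]
    have h2 : NT κ Ap Np τ ≤ 1 - Om τ := by
      rw [hMsum τ]; nlinarith [sq_nonneg (Sp τ), hsol.con_St τ, hsol.con_Ap τ]
    have hDsq : (Dl τ)^2 ≤ (1 - Om τ)^2 := by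
      nlinarith [hsol.con_St τ, hsol.con_NT τ, sq_nonneg (Sp τ), hsol.con_Ap τ]
    have hMn := hM0 τ
    rw [Real.norm_eq_abs]
    nlinarith [abs_nonneg (Dl τ), sq_abs (Dl τ)]
  show Tendsto (fun τ => (Sp τ, St τ, Dl τ, Ap τ, Np τ)) atTop _
  exact hSp0.prodMk_nhds (hSt0.prodMk_nhds (hDl0.prodMk_nhds (hAp0.prodMk_nhds hNp0)))
end

section
/- Let Γ be a solution of the Bianchi class B system converging to (s, 1−s², 0, 0, 0) as τ → −∞, for some s ∈ [−1, 1]. Then either Ã(τ) = 0 for all τ, or for every ε > 0 there exists τ_ε such that for all τ ≤ τ_ε one has e^{(4+4s+ε)τ} ≤ Ã(τ) ≤ e^{(4+4s−ε)τ}. -/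
open Real Filter Topology MeasureTheory

theorem stmt8 (γ κ s : ℝ) (Sp St Dl Ap Np : ℝ → ℝ)
    (hsol : BianchiB γ κ Sp St Dl Ap Np)
    (hs : s ∈ Set.Icc (-1:ℝ) 1)
    (hconv : Tendsto (traj Sp St Dl Ap Np) atBot
      (𝓝 ((s, 1 - s^2, 0, 0, 0) : ℝ × ℝ × ℝ × ℝ × ℝ))) :
    (∀ τ, Ap τ = 0) ∨
    (∀ ε > 0, ∃ τε : ℝ, ∀ τ ≤ τε,
      Real.exp ((4 + 4*s + ε)*τ) ≤ Ap τ ∧ Ap τ ≤ Real.exp ((4 + 4*s - ε)*τ)) := by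
  classical
  set a : ℝ := 4 + 4*s with ha
  set f : ℝ → ℝ := fun τ => 2*(qF γ κ Sp St Ap Np τ + 2*Sp τ) with hfdef
  have hSp := hsol.diff_Sp.continuous
  have hSt := hsol.diff_St.continuous
  have hAp := hsol.diff_Ap.continuous
  have hNp := hsol.diff_Np.continuous
  have hfc : Continuous f := by
    simp only [hfdef, qF, NT]
    fun_prop
  set F : ℝ → ℝ := fun u => ∫ x in (0:ℝ)..u, f x with hFdef
  have hFderiv : ∀ τ, HasDerivAt F (f τ) τ := by
    intro τ
    exact intervalIntegral.integral_hasDerivAt_right (hfc.intervalIntegrable 0 τ)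
      (hfc.stronglyMeasurableAtFilter _ _) hfc.continuousAt
  have key : ∀ τ, Ap τ = Ap 0 * Real.exp (F τ) := by
    have hg : ∀ τ, HasDerivAt (fun u => Ap u * Real.exp (-(F u))) 0 τ := by
      intro τ
      have hA : HasDerivAt Ap (f τ * Ap τ) τ := by
        have h := (hsol.diff_Ap τ).hasDerivAt
        rw [hsol.ev_Ap τ] at h
        exact h
      have hE : HasDerivAt (fun u => Real.exp (-(F u))) (Real.exp (-(F τ)) * -(f τ)) τ :=
        ((hFderiv τ).neg).exp
      have := hA.mul hE
      rw [show (0:ℝ) = f τ * Ap τ * Real.exp (-(F τ)) + Ap τ * (Real.exp (-(F τ)) * -(f τ)) by ring]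
      exact this
    have hconst : ∀ τ, Ap τ * Real.exp (-(F τ)) = Ap 0 * Real.exp (-(F 0)) := by
      intro τ
      exact is_const_of_deriv_eq_zero (fun x => ((hg x).differentiableAt))
        (fun x => (hg x).deriv) τ 0
    intro τ
    have h := hconst τ
    have hF0 : F 0 = 0 := intervalIntegral.integral_same
    rw [hF0] at h
    simp only [neg_zero, Real.exp_zero, mul_one] at h
    have := congrArg (fun x => x * Real.exp (F τ)) h
    simpa [Real.exp_neg, mul_assoc, Real.exp_ne_zero, mul_inv_cancel₀] using this
  by_cases h0 : Ap 0 = 0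
  · left
    intro τ; rw [key τ, h0, zero_mul]
  · right
    have hAp0 : 0 < Ap 0 := lt_of_le_of_ne (hsol.con_Ap 0) (Ne.symm h0)
    -- limit of f at -infty is a
    have hfl : Tendsto f atBot (𝓝 a) := by
      have hG : Continuous (fun p : ℝ×ℝ×ℝ×ℝ×ℝ =>
          2*(((3:ℝ)/2)*(2-γ)*(p.1^2 + p.2.1)
            + (1/2)*(3*γ-2)*(1 - p.2.2.2.1 - (1/3)*(p.2.2.2.2^2 - κ * p.2.2.2.1)) + 2*p.1)) := by
        fun_prop
      have h := (hG.tendsto _).comp hconv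
      have heq : (fun p : ℝ×ℝ×ℝ×ℝ×ℝ =>
          2*(((3:ℝ)/2)*(2-γ)*(p.1^2 + p.2.1)
            + (1/2)*(3*γ-2)*(1 - p.2.2.2.1 - (1/3)*(p.2.2.2.2^2 - κ * p.2.2.2.1)) + 2*p.1))
          ∘ (traj Sp St Dl Ap Np) = f := by
        funext τ
        simp only [Function.comp, traj, hfdef, qF, NT]
      rw [heq] at h
      convert h using 2
      simp only [ha]
      ring
    intro ε hε
    have hδ : (0:ℝ) < ε/2 := by linarith
    have hev : ∀ᶠ τ in atBot, |f τ - a| ≤ ε/2 := by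
      have h := Metric.tendsto_nhds.mp hfl (ε/2) hδ
      filter_upwards [h] with τ hτ
      rw [Real.dist_eq] at hτ
      exact le_of_lt hτ
    obtain ⟨T, hT⟩ := eventually_atBot.mp hev
    set C : ℝ := ∫ x in (0:ℝ)..T, f x with hC
    have hsplit : ∀ τ, F τ = C - ∫ x in τ..T, f x := by
      intro τ
      have h := intervalIntegral.integral_add_adjacent_intervals (μ := MeasureTheory.volume)
        (hfc.intervalIntegrable 0 T) (hfc.intervalIntegrable T τ)
      have h2 : (∫ x in T..τ, f x) = - ∫ x in τ..T, f x :=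
        intervalIntegral.integral_symm τ T
      simp only [hFdef, hC]
      linarith [h, h2]
    have hint : ∀ τ ≤ T, (a - ε/2)*(T - τ) ≤ (∫ x in τ..T, f x) ∧
        (∫ x in τ..T, f x) ≤ (a + ε/2)*(T - τ) := by
      intro τ hτ
      have hlow : ∀ x ∈ Set.Icc τ T, (a - ε/2) ≤ f x := by
        intro x hx
        have := hT x hx.2
        have := abs_le.mp this
        linarith [this.1]
      have hhigh : ∀ x ∈ Set.Icc τ T, f x ≤ (a + ε/2) := by
        intro x hx
        have := abs_le.mp (hT x hx.2)
        linarith [this.2]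
      constructor
      · have h := intervalIntegral.integral_mono_on (μ := MeasureTheory.volume) hτ
          intervalIntegrable_const (hfc.intervalIntegrable τ T) hlow
        rw [intervalIntegral.integral_const, smul_eq_mul] at h
        linarith [h]
      · have h := intervalIntegral.integral_mono_on (μ := MeasureTheory.volume) hτ
          (hfc.intervalIntegrable τ T) intervalIntegrable_const hhigh
        rw [intervalIntegral.integral_const, smul_eq_mul] at h
        linarith [h]
    set L : ℝ := Real.log (Ap 0) with hL
    have hApExp : ∀ τ, Ap τ = Real.exp (L + F τ) := by
      intro τ
      rw [key τ, Real.exp_add, Real.exp_log hAp0]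
    refine ⟨min T (min ((-2/ε)*(L + C - (a-ε/2)*T)) ((2/ε)*(L + C - (a+ε/2)*T))), ?_⟩
    intro τ hτ
    have hτT : τ ≤ T := le_trans hτ (min_le_left _ _)
    have hτ1 : τ ≤ (-2/ε)*(L + C - (a-ε/2)*T) :=
      le_trans hτ (le_trans (min_le_right _ _) (min_le_left _ _))
    have hτ2 : τ ≤ (2/ε)*(L + C - (a+ε/2)*T) :=
      le_trans hτ (le_trans (min_le_right _ _) (min_le_right _ _))
    obtain ⟨hi1, hi2⟩ := hint τ hτT
    have hFup : F τ ≤ C - (a - ε/2)*(T - τ) := by rw [hsplit τ]; linarith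
    have hFlo : C - (a + ε/2)*(T - τ) ≤ F τ := by rw [hsplit τ]; linarith
    clear_value a f F C L
    constructor
    · rw [hApExp τ]
      apply Real.exp_le_exp.mpr
      have h2 : (ε/2)*τ ≤ L + C - (a+ε/2)*T := by
        have := mul_le_mul_of_nonneg_left hτ2 (le_of_lt hδ)
        calc (ε/2)*τ ≤ (ε/2)*((2/ε)*(L + C - (a+ε/2)*T)) := this
          _ = L + C - (a+ε/2)*T := by field_simp
      have e1 : L + (C - (a + ε/2)*(T - τ)) = L + C - (a+ε/2)*T + a*τ + (ε/2)*τ := by ring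
      have e2 : (a+ε)*τ = a*τ + (ε/2)*τ + (ε/2)*τ := by ring
      linarith [hFlo, h2, e1, e2]
    · rw [hApExp τ]
      apply Real.exp_le_exp.mpr
      have h2 : (ε/2)*τ ≤ -(L + C - (a-ε/2)*T) := by
        have := mul_le_mul_of_nonneg_left hτ1 (le_of_lt hδ)
        calc (ε/2)*τ ≤ (ε/2)*((-2/ε)*(L + C - (a-ε/2)*T)) := this
          _ = -(L + C - (a-ε/2)*T) := by field_simp
      have e1 : C - (a - ε/2)*(T - τ) = C - (a-ε/2)*T + a*τ - (ε/2)*τ := by ring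
      have e2 : (a-ε)*τ = a*τ - (ε/2)*τ - (ε/2)*τ := by ring
      linarith [hFup, h2, e1, e2]
end

section
/- Let Γ be a solution of the Bianchi class B system such that every α-limit point of Γ lies in the Kasner parabola K, and suppose there exist δ > 0 and τ₀ with Σ̃(τ) > δ for all τ ≤ τ₀. Then one of the following holds: (i) Δ(τ) = 0 and N₊(τ) = 0 for all τ; (ii) there exists τ₁ such that Δ(τ)N₊(τ) > 0 for all τ ≤ τ₁; (iii) there exists τ₁ such that Δ(τ)N₊(τ) < 0 for all τ ≤ τ₁. -/
open Real Filter Topology MeasureTheory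

set_option maxHeartbeats 2000000 in
theorem stmt10 (γ κ δ τ₀ : ℝ) (Sp St Dl Ap Np : ℝ → ℝ)
    (hsol : BianchiB γ κ Sp St Dl Ap Np)
    (hlim : ∀ p : ℝ × ℝ × ℝ × ℝ × ℝ, AlphaLimitPt Sp St Dl Ap Np p → p ∈ Kasner)
    (hδ : 0 < δ) (hSt : ∀ τ ≤ τ₀, δ < St τ) :
    (∀ τ, Dl τ = 0 ∧ Np τ = 0) ∨
    (∃ τ₁ : ℝ, ∀ τ ≤ τ₁, 0 < Dl τ * Np τ) ∨
    (∃ τ₁ : ℝ, ∀ τ ≤ τ₁, Dl τ * Np τ < 0) := by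
  obtain ⟨hγ0, hγ2⟩ := hsol.hγ
  have cSp := hsol.diff_Sp.continuous
  have cSt := hsol.diff_St.continuous
  have cDl := hsol.diff_Dl.continuous
  have cAp := hsol.diff_Ap.continuous
  have cNp := hsol.diff_Np.continuous
  set Nf : ℝ → ℝ := NT κ Ap Np with hNf
  set q : ℝ → ℝ := qF γ κ Sp St Ap Np with hq
  have cNf : Continuous Nf := by
    simp only [hNf]; unfold NT; fun_prop
  have cq : Continuous q := by
    simp only [hq, hNf]; unfold qF NT; fun_prop
  -- basic bounds
  have hSp2 : ∀ τ, (Sp τ)^2 ≤ 1 := fun τ => by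
    have := hsol.con_St τ; have := hsol.con_Ap τ; have := hsol.con_NT τ
    have := hsol.con_sum τ; linarith
  have hSt1 : ∀ τ, St τ ≤ 1 := fun τ => by
    have := sq_nonneg (Sp τ); have := hsol.con_Ap τ; have := hsol.con_NT τ
    have := hsol.con_sum τ; linarith
  have hAp1 : ∀ τ, Ap τ ≤ 1 := fun τ => by
    have := sq_nonneg (Sp τ); have := hsol.con_St τ; have := hsol.con_NT τ
    have := hsol.con_sum τ; linarith
  have hNf1 : ∀ τ, Nf τ ≤ 1 := fun τ => by
    have := sq_nonneg (Sp τ); have := hsol.con_St τ; have := hsol.con_Ap τ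
    have := hsol.con_sum τ; linarith
  have hqb : ∀ τ, -1 ≤ q τ ∧ q τ ≤ 5 := by
    intro τ
    have h1 := hsol.con_St τ; have h2 := hsol.con_Ap τ; have h3 := hsol.con_NT τ
    have h4 := hsol.con_sum τ; have h5 := sq_nonneg (Sp τ)
    rw [hq]; unfold qF
    rw [← hNf]
    constructor <;>
    nlinarith [mul_nonneg (by linarith : (0:ℝ) ≤ 2-γ)
        (by nlinarith : (0:ℝ) ≤ 1-((Sp τ)^2+St τ)),
      mul_nonneg (by linarith : (0:ℝ) ≤ 2-γ) (by nlinarith : (0:ℝ) ≤ (Sp τ)^2+St τ),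
      mul_nonneg (by linarith : (0:ℝ) ≤ 3*γ) (by nlinarith : (0:ℝ) ≤ 1-Ap τ-Nf τ),
      mul_nonneg (by linarith : (0:ℝ) ≤ 6-3*γ) (by nlinarith : (0:ℝ) ≤ 1-Ap τ-Nf τ),
      mul_nonneg (by linarith : (0:ℝ) ≤ 3*γ) (by nlinarith : (0:ℝ) ≤ Ap τ+Nf τ)]
  have hNp2 : ∀ τ, (Np τ)^2 = 3 * Nf τ + κ * Ap τ := fun τ => by
    simp only [hNf]; unfold NT; ring
  -- the trajectory stays in a compact box
  set M : ℝ := 3 + |κ| with hM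
  have hM1 : (1:ℝ) ≤ M := by have := abs_nonneg κ; simp only [hM]; linarith
  have htraj : ∀ τ, traj Sp St Dl Ap Np τ ∈
      Set.Icc ((-1, 0, -1, 0, -M) : ℝ × ℝ × ℝ × ℝ × ℝ) (1, 1, 1, 1, M) := by
    intro τ
    have h1 := hsol.con_St τ; have h2 := hsol.con_Ap τ; have h3 := hsol.con_NT τ
    have h4 := hSp2 τ; have h5 := hSt1 τ; have h6 := hAp1 τ; have h7 := hNf1 τ
    have hDl2 : (Dl τ)^2 ≤ 1 := by
      have := hsol.con_main τ
      have := mul_nonneg (sq_nonneg (Sp τ)) h2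
      nlinarith [mul_nonneg h1 (hsol.con_NT τ)]
    have hNpb : (Np τ)^2 ≤ M := by
      have := hNp2 τ
      have hk : κ * Ap τ ≤ |κ| := by
        rcases le_or_gt 0 κ with hk0 | hk0
        · calc κ * Ap τ ≤ κ * 1 := by nlinarith
            _ ≤ |κ| := by rw [mul_one]; exact le_abs_self κ
        · have : κ * Ap τ ≤ 0 := mul_nonpos_of_nonpos_of_nonneg hk0.le h2
          linarith [abs_nonneg κ]
      simp only [hM]; linarith
    have b1 : -1 ≤ Sp τ := by nlinarith [sq_nonneg (Sp τ + 1)]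
    have b2 : Sp τ ≤ 1 := by nlinarith [sq_nonneg (Sp τ - 1)]
    have b3 : -1 ≤ Dl τ := by nlinarith [sq_nonneg (Dl τ + 1)]
    have b4 : Dl τ ≤ 1 := by nlinarith [sq_nonneg (Dl τ - 1)]
    have b5 : -M ≤ Np τ := by nlinarith [sq_nonneg (Np τ + M)]
    have b6 : Np τ ≤ M := by nlinarith [sq_nonneg (Np τ - M)]
    simp only [traj, Set.mem_Icc, Prod.mk_le_mk]
    exact ⟨⟨b1, h1, b3, h2, b5⟩, b2, h5, b4, h6, b6⟩
  -- Nf tends to 0 at -∞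
  have hNto : ∀ ε > (0:ℝ), ∃ τ₂, ∀ τ ≤ τ₂, Nf τ < ε := by
    intro ε hε
    by_contra hcon
    push_neg at hcon
    choose t ht hεt using fun n : ℕ => hcon (-(n : ℝ))
    obtain ⟨p, _, φ, hφ, hconv⟩ :=
      (isCompact_Icc (a := ((-1, 0, -1, 0, -M) : ℝ × ℝ × ℝ × ℝ × ℝ)) (b := (1,1,1,1,M))).tendsto_subseq (fun n => htraj (t n))
    have hbot : Tendsto (fun n => t (φ n)) atTop atBot := by
      apply tendsto_atBot_mono (f := fun n : ℕ => -(n : ℝ)) (g := fun n => t (φ n))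
      · intro n
        calc t (φ n) ≤ -((φ n : ℕ) : ℝ) := ht (φ n)
          _ ≤ -(n : ℝ) := by
              have h : n ≤ φ n := hφ.le_apply
              have h2 : (n : ℝ) ≤ (φ n : ℝ) := by exact_mod_cast h
              linarith
      · exact tendsto_neg_atBot_iff.2 tendsto_natCast_atTop_atTop
    obtain ⟨s, _, hps⟩ := hlim p ⟨fun n => t (φ n), hbot, hconv⟩
    set F : ℝ × ℝ × ℝ × ℝ × ℝ → ℝ := fun v => (1/3) * (v.2.2.2.2^2 - κ * v.2.2.2.1) with hF
    have cF : Continuous F := by fun_prop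
    have hFN : ∀ τ, F (traj Sp St Dl Ap Np τ) = Nf τ := fun τ => rfl
    have hto0 : Tendsto (fun n => Nf (t (φ n))) atTop (𝓝 0) := by
      have := (cF.tendsto p).comp hconv
      simp only [Function.comp_def, hFN] at this
      convert this using 2
      rw [hps]; simp [hF]
    have : ε ≤ 0 := ge_of_tendsto hto0 (Eventually.of_forall fun n => hεt (φ n))
    linarith
  obtain ⟨τ₂', hτ₂'⟩ := hNto (δ/2) (by linarith)
  set τ₂ : ℝ := min τ₂' τ₀ with hτ₂
  have hgap : ∀ τ ≤ τ₂, δ/2 ≤ St τ - Nf τ := by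
    intro τ hτ
    have h1 := hSt τ (hτ.trans (min_le_right _ _))
    have h2 := hτ₂' τ (hτ.trans (min_le_left _ _))
    linarith
  -- derivative of Z = Dl * Np
  set Z : ℝ → ℝ := fun τ => Dl τ * Np τ with hZ
  set ZD : ℝ → ℝ := fun τ => deriv Dl τ * Np τ + Dl τ * deriv Np τ with hZD
  have hZd : ∀ τ, HasDerivAt Z (ZD τ) τ := fun τ =>
    ((hsol.diff_Dl τ).hasDerivAt.mul (hsol.diff_Np τ).hasDerivAt)
  have hkey : ∀ τ, ZD τ - (3 * q τ + 4 * Sp τ - 2) * Z τ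
      = 2 * (St τ - Nf τ) * (Np τ)^2 + 6 * (Dl τ)^2 := by
    intro τ
    simp only [hZD, hZ, hsol.ev_Dl τ, hsol.ev_Np τ, ← hq, ← hNf]
    ring
  -- the integrating factor
  set a : ℝ → ℝ := fun τ => 3 * q τ + 4 * Sp τ - 2 with ha
  have ca : Continuous a := by fun_prop
  set A : ℝ → ℝ := fun τ => ∫ s in (0:ℝ)..τ, a s with hA
  have hAd : ∀ τ, HasDerivAt A (a τ) τ := fun τ =>
    (ca.integral_hasStrictDerivAt 0 τ).hasDerivAt
  set g : ℝ → ℝ := fun τ => Real.exp (-(A τ)) * Z τ with hg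
  have hgd : ∀ τ, HasDerivAt g (Real.exp (-(A τ)) * (ZD τ - a τ * Z τ)) τ := by
    intro τ
    have h1 : HasDerivAt (fun s => Real.exp (-(A s))) (Real.exp (-(A τ)) * (-(a τ))) τ :=
      ((hAd τ).neg).exp
    have h2 := h1.mul (hZd τ)
    exact h2.congr_deriv (by ring)
  have hgmono : MonotoneOn g (Set.Iic τ₂) := by
    apply monotoneOn_of_deriv_nonneg (convex_Iic τ₂)
    · exact Continuous.continuousOn (by fun_prop)
    · intro x _
      exact ((hgd x).differentiableAt).differentiableWithinAt
    · intro x hx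
      rw [interior_Iic] at hx
      rw [(hgd x).deriv]
      have h1 : ZD x - a x * Z x = 2 * (St x - Nf x) * (Np x)^2 + 6 * (Dl x)^2 := hkey x
      have h2 := hgap x (le_of_lt hx)
      have h3 : 0 ≤ ZD x - a x * Z x := by
        rw [h1]
        nlinarith [sq_nonneg (Np x), sq_nonneg (Dl x),
          mul_nonneg (by linarith : (0:ℝ) ≤ 2 * (St x - Nf x)) (sq_nonneg (Np x))]
      positivity
  have hexppos : ∀ τ, (0:ℝ) < Real.exp (-(A τ)) := fun τ => Real.exp_pos _
  by_cases hA1 : ∃ τ ≤ τ₂, Z τ < 0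
  · obtain ⟨τs, hτs, hZs⟩ := hA1
    right; right
    refine ⟨τs, fun τ hτ => ?_⟩
    have h1 : g τ ≤ g τs := hgmono (Set.mem_Iic.2 (hτ.trans hτs)) (Set.mem_Iic.2 hτs) hτ
    have h2 : g τs < 0 := mul_neg_of_pos_of_neg (hexppos τs) hZs
    have h3 : g τ < 0 := lt_of_le_of_lt h1 h2
    by_contra hc
    push_neg at hc
    have : 0 ≤ g τ := mul_nonneg (hexppos τ).le (by simpa [hZ] using hc)
    linarith
  · push_neg at hA1
    by_cases hB : ∃ τ ≤ τ₂, Z τ = 0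
    · -- case (i)
      obtain ⟨τs, hτs, hZs⟩ := hB
      left
      have hZ0 : ∀ τ ≤ τs, Z τ = 0 := by
        intro τ hτ
        have h1 : g τ ≤ g τs :=
          hgmono (Set.mem_Iic.2 (hτ.trans hτs)) (Set.mem_Iic.2 hτs) hτ
        have h2 : g τs = 0 := by simp [hg, hZs]
        have h3 : 0 ≤ g τ := mul_nonneg (hexppos τ).le (hA1 τ (hτ.trans hτs))
        have h4 : g τ = 0 := le_antisymm (h2 ▸ h1) h3
        have := (hexppos τ).ne'
        simpa [hg, this] using h4
      have hzero : ∀ τ < τs, Dl τ = 0 ∧ Np τ = 0 := by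
        intro τ hτ
        have hder : deriv Z τ = 0 := by
          have hev : Z =ᶠ[𝓝 τ] fun _ => (0:ℝ) := by
            filter_upwards [Iio_mem_nhds hτ] with x hx
            exact hZ0 x (le_of_lt hx)
          rw [hev.deriv_eq]
          simp
        have hZτ : Z τ = 0 := hZ0 τ hτ.le
        have hZDτ : ZD τ = 0 := by rw [← (hZd τ).deriv, hder]
        have h1 : 2 * (St τ - Nf τ) * (Np τ)^2 + 6 * (Dl τ)^2 = 0 := by
          rw [← hkey τ, hZDτ, hZτ]; ring
        have h2 := hgap τ (hτ.le.trans hτs)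
        have hNp : Np τ = 0 := by
          have : (Np τ)^2 = 0 := by
            nlinarith [sq_nonneg (Np τ), sq_nonneg (Dl τ),
              mul_nonneg (by linarith : (0:ℝ) ≤ 2*(St τ - Nf τ)) (sq_nonneg (Np τ))]
          exact pow_eq_zero_iff (two_ne_zero) |>.1 this
        have hDl : Dl τ = 0 := by
          have h3 : (Dl τ)^2 = 0 := by
            nlinarith [mul_nonneg (by linarith : (0:ℝ) ≤ 2*(St τ - Nf τ)) (sq_nonneg (Np τ))]
          exact pow_eq_zero_iff (two_ne_zero) |>.1 h3
        exact ⟨hDl, hNp⟩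
      -- Gronwall forward propagation
      set E : ℝ → ℝ := fun τ => (Dl τ)^2 + (Np τ)^2 with hE
      have hEd : ∀ τ, HasDerivAt E
          (2 * Dl τ * deriv Dl τ + 2 * Np τ * deriv Np τ) τ := by
        intro τ
        have h1 : HasDerivAt (fun s => (Dl s)^2) (2 * Dl τ * deriv Dl τ) τ := by
          have := ((hsol.diff_Dl τ).hasDerivAt).pow 2
          simpa [mul_comm, mul_assoc, mul_left_comm, Pi.pow_def] using this
        have h2 : HasDerivAt (fun s => (Np s)^2) (2 * Np τ * deriv Np τ) τ := by
          have := ((hsol.diff_Np τ).hasDerivAt).pow 2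
          simpa [mul_comm, mul_assoc, mul_left_comm, Pi.pow_def] using this
        exact h1.add h2
      have hEbound : ∀ τ, 2 * Dl τ * deriv Dl τ + 2 * Np τ * deriv Np τ ≤ 100 * E τ := by
        intro τ
        rw [hsol.ev_Dl τ, hsol.ev_Np τ, ← hq, ← hNf]
        have hq1 := (hqb τ).1; have hq2 := (hqb τ).2
        have hx := hSp2 τ
        have hs1 := hsol.con_St τ; have hs2 := hSt1 τ
        have hn1 := hsol.con_NT τ; have hn2 := hNf1 τ
        rw [← hNf] at hn1
        have hx1 : Sp τ ≤ 1 := by nlinarith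
        have hx2 : -1 ≤ Sp τ := by nlinarith
        simp only [hE]
        nlinarith [sq_nonneg (Dl τ + Np τ), sq_nonneg (Dl τ - Np τ), sq_nonneg (Dl τ),
          sq_nonneg (Np τ),
          mul_nonneg (by linarith : (0:ℝ) ≤ 5 - q τ) (sq_nonneg (Dl τ)),
          mul_nonneg (by linarith : (0:ℝ) ≤ q τ + 1) (sq_nonneg (Dl τ)),
          mul_nonneg (by linarith : (0:ℝ) ≤ 5 - q τ) (sq_nonneg (Np τ)),
          mul_nonneg (by linarith : (0:ℝ) ≤ q τ + 1) (sq_nonneg (Np τ)),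
          mul_nonneg (by linarith : (0:ℝ) ≤ 1 - Sp τ) (sq_nonneg (Dl τ)),
          mul_nonneg (by linarith : (0:ℝ) ≤ 1 + Sp τ) (sq_nonneg (Dl τ)),
          mul_nonneg (by linarith : (0:ℝ) ≤ 1 - Sp τ) (sq_nonneg (Np τ)),
          mul_nonneg (by linarith : (0:ℝ) ≤ 1 + Sp τ) (sq_nonneg (Np τ)),
          mul_nonneg (by linarith : (0:ℝ) ≤ 1 - (St τ - Nf τ)) (sq_nonneg (Dl τ + Np τ)),
          mul_nonneg (by linarith : (0:ℝ) ≤ 1 + (St τ - Nf τ)) (sq_nonneg (Dl τ - Np τ))]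
      set h : ℝ → ℝ := fun τ => Real.exp (-(100 * τ)) * E τ with hh
      have hhd : ∀ τ, HasDerivAt h
          (Real.exp (-(100 * τ)) *
            ((2 * Dl τ * deriv Dl τ + 2 * Np τ * deriv Np τ) - 100 * E τ)) τ := by
        intro τ
        have h1 : HasDerivAt (fun s : ℝ => Real.exp (-(100 * s)))
            (Real.exp (-(100 * τ)) * (-100)) τ := by
          have h0 : HasDerivAt (fun s : ℝ => -(100 * s)) (-100) τ := by
            simpa [Pi.neg_def] using ((hasDerivAt_id τ).const_mul (100:ℝ)).neg
          exact h0.exp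
        have h2 := h1.mul (hEd τ)
        exact h2.congr_deriv (by ring)
      have hanti : Antitone h := by
        apply antitone_of_deriv_nonpos
        · exact fun τ => ((hhd τ).differentiableAt)
        · intro τ
          rw [(hhd τ).deriv]
          have h1 := hEbound τ
          have h2 : Real.exp (-(100 * τ)) > 0 := Real.exp_pos _
          nlinarith
      have hzero' : ∀ τ, Dl τ = 0 ∧ Np τ = 0 := by
        intro τ
        rcases lt_or_ge τ τs with hτ | hτ
        · exact hzero τ hτ
        · have hE3 : E (τs - 1) = 0 := by
            obtain ⟨hD, hN⟩ := hzero (τs - 1) (by linarith)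
            simp [hE, hD, hN]
          have h1 : h τ ≤ h (τs - 1) := hanti (by linarith)
          have h2 : h (τs - 1) = 0 := by simp [hh, hE3]
          have h3 : 0 ≤ E τ := by positivity
          have h4 : 0 < Real.exp (-(100 * τ)) := Real.exp_pos _
          have h5 : (Dl τ)^2 + (Np τ)^2 = 0 := by
            have h6 : h τ ≤ 0 := h2 ▸ h1
            simp only [hh, hE] at h6
            nlinarith [sq_nonneg (Dl τ), sq_nonneg (Np τ)]
          constructor
          · exact pow_eq_zero_iff (two_ne_zero) |>.1
              (by nlinarith [sq_nonneg (Dl τ), sq_nonneg (Np τ)])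
          · exact pow_eq_zero_iff (two_ne_zero) |>.1
              (by nlinarith [sq_nonneg (Dl τ), sq_nonneg (Np τ)])
      exact hzero'
    · -- case (ii)
      push_neg at hB
      right; left
      refine ⟨τ₂, fun τ hτ => ?_⟩
      have h1 := hA1 τ hτ
      have h2 := hB τ hτ
      exact lt_of_le_of_ne h1 (Ne.symm h2)
end

section
/- Let Γ be a solution of the Bianchi class B system converging to (s, 1−s², 0, 0, 0) as τ → −∞. (a) If s ∈ (−1, 1) and Δ(τ)N₊(τ) > 0 for all τ ≤ τ₀, then for every ε > 0 there exists τ_ε such that for all τ ≤ τ_ε: e^{(2+2s+2√(3(1−s²))+ε)τ} ≤ |Δ(τ) + √((1−s²)/3)·N₊(τ)| ≤ e^{(2+2s+2√(3(1−s²))−ε)τ}. (b) If s ∈ (−1, 1) and Δ(τ)N₊(τ) < 0 for all τ ≤ τ₀, then for every ε > 0 there exists τ_ε such that for all τ ≤ τ_ε: e^{(2+2s−2√(3(1−s²))+ε)τ} ≤ |Δ(τ) − √((1−s²)/3)·N₊(τ)| ≤ e^{(2+2s−2√(3(1−s²))−ε)τ}. (c) If s = 1 and Δ(τ)N₊(τ)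 > 0 (respectively < 0) for all τ ≤ τ₀, then for every ε > 0 there exist ε̂ > 0 and τ_ε such that for all τ ≤ τ_ε: e^{(4+ε)τ} ≤ |Δ(τ) + ε̂·N₊(τ)| ≤ e^{(4−ε)τ} (respectively e^{(4+ε)τ} ≤ |Δ(τ) − ε̂·N₊(τ)| ≤ e^{(4−ε)τ}). -/
open Real Filter Topology MeasureTheory

lemma absAdd' {b x y : ℝ} (h : 0 < b * (x * y)) : |x + b*y| = |x| + |b| * |y| := by
  rw [← abs_mul]
  rcases lt_trichotomy x 0 with hx | hx | hx
  · have hby : b * y < 0 := by nlinarith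
    rw [abs_of_neg hx, abs_of_neg hby, abs_of_neg (by linarith)]; ring
  · simp [hx] at h
  · have hby : 0 < b * y := by nlinarith
    rw [abs_of_pos hx, abs_of_pos hby, abs_of_pos (by linarith)]

lemma compTendsto {Sp St Dl Ap Np : ℝ → ℝ} {s : ℝ}
    (hconv : Tendsto (traj Sp St Dl Ap Np) atBot
      (𝓝 ((s, 1 - s^2, 0, 0, 0) : ℝ × ℝ × ℝ × ℝ × ℝ))) :
    Tendsto Sp atBot (𝓝 s) ∧ Tendsto St atBot (𝓝 (1 - s^2)) ∧
    Tendsto Ap atBot (𝓝 0) ∧ Tendsto Np atBot (𝓝 0) := by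
  refine ⟨(continuous_fst.tendsto _).comp hconv,
    ((continuous_fst.comp continuous_snd).tendsto _).comp hconv,
    ((continuous_fst.comp (continuous_snd.comp (continuous_snd.comp continuous_snd))).tendsto _).comp hconv,
    ((continuous_snd.comp (continuous_snd.comp (continuous_snd.comp continuous_snd))).tendsto _).comp hconv⟩

lemma NTTendsto {κ : ℝ} {Ap Np : ℝ → ℝ}
    (hAp : Tendsto Ap atBot (𝓝 0)) (hNp : Tendsto Np atBot (𝓝 0)) :
    Tendsto (NT κ Ap Np) atBot (𝓝 0) := by
  have h : Tendsto (fun τ => (1/3 : ℝ) * ((Np τ)^2 - κ * Ap τ)) atBot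
      (𝓝 ((1/3) * ((0:ℝ)^2 - κ * 0))) :=
    ((hNp.pow 2).sub (hAp.const_mul κ)).const_mul (1/3)
  have hNTeq : NT κ Ap Np = fun τ => (1/3 : ℝ) * ((Np τ)^2 - κ * Ap τ) := rfl
  rw [hNTeq]
  simpa using h

lemma qFTendsto {γ κ s : ℝ} {Sp St Ap Np : ℝ → ℝ}
    (hSp : Tendsto Sp atBot (𝓝 s)) (hSt : Tendsto St atBot (𝓝 (1 - s^2)))
    (hAp : Tendsto Ap atBot (𝓝 0)) (hNp : Tendsto Np atBot (𝓝 0)) :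
    Tendsto (qF γ κ Sp St Ap Np) atBot (𝓝 2) := by
  have hNT := NTTendsto (κ := κ) hAp hNp
  have h : Tendsto (fun τ => (3/2)*(2-γ)*((Sp τ)^2 + St τ)
      + (1/2)*(3*γ-2)*(1 - Ap τ - NT κ Ap Np τ)) atBot
      (𝓝 ((3/2)*(2-γ)*(s^2 + (1 - s^2)) + (1/2)*(3*γ-2)*(1 - 0 - 0))) :=
    (((hSp.pow 2).add hSt).const_mul _).add
      ((((tendsto_const_nhds (x := (1:ℝ))).sub hAp).sub hNT).const_mul _)
  have h2 : (3/2)*(2-γ)*(s^2 + (1 - s^2)) + (1/2)*(3*γ-2)*(1 - 0 - 0) = (2:ℝ) := by ring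
  rw [h2] at h
  exact h

lemma keyLem (f : ℝ → ℝ) (hf : Differentiable ℝ f) (lam ε T : ℝ) (hε : 0 < ε)
    (hne : ∀ τ ≤ T, f τ ≠ 0)
    (hest : ∀ τ ≤ T, |deriv f τ - lam * f τ| ≤ (ε/2) * |f τ|) :
    ∃ τε : ℝ, ∀ τ ≤ τε,
      Real.exp ((lam+ε)*τ) ≤ |f τ| ∧ |f τ| ≤ Real.exp ((lam-ε)*τ) := by
  set g : ℝ → ℝ := fun τ => Real.log (f τ) with hg_def
  have key : ∀ τ < T, (lam - ε/2) * (T - τ) ≤ g T - g τ ∧ g T - g τ ≤ (lam + ε/2) * (T - τ) := by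
    intro τ hτ
    have hcont : ContinuousOn g (Set.Icc τ T) :=
      (hf.continuous.continuousOn).log (fun x hx => hne x hx.2)
    have hder : ∀ x ∈ Set.Ioo τ T, HasDerivAt g (deriv f x / f x) x := fun x hx =>
      ((hf x).hasDerivAt).log (hne x hx.2.le)
    obtain ⟨c, hc, hslope⟩ := exists_hasDerivAt_eq_slope g (fun x => deriv f x / f x) hτ hcont hder
    have hfc : f c ≠ 0 := hne c hc.2.le
    have h1 : |deriv f c / f c - lam| ≤ ε/2 := by
      have h2 : deriv f c / f c - lam = (deriv f c - lam * f c) / f c := by field_simp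
      rw [h2, abs_div, div_le_iff₀ (abs_pos.2 hfc)]
      calc |deriv f c - lam * f c| ≤ ε/2 * |f c| := hest c hc.2.le
        _ = ε / 2 * |f c| := by ring
    have hTτ : 0 < T - τ := by linarith
    have h3 : g T - g τ = (deriv f c / f c) * (T - τ) := by
      rw [hslope]; field_simp
    rw [abs_le] at h1
    constructor <;> nlinarith [h1.1, h1.2]
  refine ⟨min (T - 1) (min ((g T - (lam+ε/2)*T) * (2/ε)) (-(g T - (lam-ε/2)*T) * (2/ε))), fun τ hτ => ?_⟩
  have hτT : τ < T := by
    have := le_trans hτ (min_le_left _ _); linarith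
  have hA : τ ≤ (g T - (lam+ε/2)*T) * (2/ε) := le_trans hτ ((min_le_right _ _).trans (min_le_left _ _))
  have hB : τ ≤ -(g T - (lam-ε/2)*T) * (2/ε) := le_trans hτ ((min_le_right _ _).trans (min_le_right _ _))
  obtain ⟨k1, k2⟩ := key τ hτT
  have hA' : ε/2 * τ ≤ g T - (lam+ε/2)*T := by
    have h := mul_le_mul_of_nonneg_left hA (by positivity : (0:ℝ) ≤ ε/2)
    calc ε/2*τ ≤ ε/2 * ((g T - (lam+ε/2)*T) * (2/ε)) := h
      _ = g T - (lam+ε/2)*T := by field_simp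
  have hB' : ε/2 * τ ≤ -(g T - (lam-ε/2)*T) := by
    have h := mul_le_mul_of_nonneg_left hB (by positivity : (0:ℝ) ≤ ε/2)
    calc ε/2*τ ≤ ε/2 * (-(g T - (lam-ε/2)*T) * (2/ε)) := h
      _ = -(g T - (lam-ε/2)*T) := by field_simp
  have hglow : (lam+ε)*τ ≤ g τ := by nlinarith
  have hghigh : g τ ≤ (lam-ε)*τ := by nlinarith
  have habs : Real.exp (g τ) = |f τ| := Real.exp_log_eq_abs (hne τ hτT.le)
  constructor
  · rw [← habs]; exact Real.exp_le_exp.2 hglow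
  · rw [← habs]; exact Real.exp_le_exp.2 hghigh

lemma master {γ κ : ℝ} (lam b τ₀ ε : ℝ) {Sp St Dl Ap Np : ℝ → ℝ}
    (hsol : BianchiB γ κ Sp St Dl Ap Np) (hb : b ≠ 0) (hε : 0 < ε)
    (hsgn : ∀ τ ≤ τ₀, 0 < b * (Dl τ * Np τ))
    (hest : ∀ᶠ τ in atBot,
      |2*(qF γ κ Sp St Ap Np τ + Sp τ - 1) + 6*b - lam| +
      |2*(St τ - NT κ Ap Np τ) + b*(qF γ κ Sp St Ap Np τ + 2*Sp τ) - lam*b| / |b| ≤ ε/2) :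
    ∃ τε : ℝ, ∀ τ ≤ τε,
      Real.exp ((lam+ε)*τ) ≤ |Dl τ + b * Np τ| ∧
      |Dl τ + b * Np τ| ≤ Real.exp ((lam-ε)*τ) := by
  set c₁ : ℝ → ℝ := fun τ => 2*(qF γ κ Sp St Ap Np τ + Sp τ - 1) + 6*b - lam with hc₁
  set c₂ : ℝ → ℝ := fun τ => 2*(St τ - NT κ Ap Np τ) + b*(qF γ κ Sp St Ap Np τ + 2*Sp τ) - lam*b with hc₂
  set f : ℝ → ℝ := fun τ => Dl τ + b * Np τ with hf_def
  have hfd : Differentiable ℝ f := hsol.diff_Dl.add (hsol.diff_Np.const_mul b)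
  have hderiv : ∀ τ, deriv f τ = deriv Dl τ + b * deriv Np τ := by
    intro τ
    rw [hf_def]
    rw [deriv_fun_add (hsol.diff_Dl τ) ((hsol.diff_Np τ).const_mul b),
      deriv_const_mul b (hsol.diff_Np τ)]
  obtain ⟨T, hT⟩ := (hest.and (eventually_le_atBot τ₀)).exists_forall_of_atBot
  have hbpos : 0 < |b| := abs_pos.2 hb
  have habs : ∀ τ ≤ T, |f τ| = |Dl τ| + |b| * |Np τ| := fun τ hτ =>
    absAdd' (hsgn τ ((hT τ hτ).2))
  have hne : ∀ τ ≤ T, f τ ≠ 0 := by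
    intro τ hτ h0
    have h1 := hsgn τ (hT τ hτ).2
    have h2 : Np τ ≠ 0 := by
      intro h3; rw [h3] at h1; simp at h1
    have := habs τ hτ
    rw [h0] at this
    simp only [abs_zero] at this
    have : |b| * |Np τ| ≤ 0 := by nlinarith [abs_nonneg (Dl τ)]
    nlinarith [abs_pos.2 h2]
  refine keyLem f hfd lam ε T hε hne ?_
  intro τ hτ
  have hid : deriv f τ - lam * f τ = c₁ τ * Dl τ + c₂ τ * Np τ := by
    rw [hderiv, hsol.ev_Dl, hsol.ev_Np, hf_def, hc₁, hc₂]; ring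
  have hDl : |Dl τ| ≤ |f τ| := by rw [habs τ hτ]; nlinarith [abs_nonneg (Np τ)]
  have hNp : |b| * |Np τ| ≤ |f τ| := by rw [habs τ hτ]; nlinarith [abs_nonneg (Dl τ)]
  have hkey : |c₁ τ * Dl τ + c₂ τ * Np τ| ≤ (|c₁ τ| + |c₂ τ| / |b|) * |f τ| := by
    have h5 : |c₂ τ| / |b| * |b| = |c₂ τ| := div_mul_cancel₀ _ (ne_of_gt hbpos)
    calc |c₁ τ * Dl τ + c₂ τ * Np τ| ≤ |c₁ τ| * |Dl τ| + |c₂ τ| * |Np τ| := by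
          rw [← abs_mul, ← abs_mul]; exact abs_add_le _ _
      _ ≤ |c₁ τ| * |f τ| + (|c₂ τ| / |b|) * (|b| * |Np τ|) := by
          rw [← mul_assoc, h5]
          exact add_le_add (mul_le_mul_of_nonneg_left hDl (abs_nonneg _)) le_rfl
      _ ≤ |c₁ τ| * |f τ| + (|c₂ τ| / |b|) * |f τ| := by
          have : 0 ≤ |c₂ τ| / |b| := by positivity
          nlinarith
      _ = (|c₁ τ| + |c₂ τ| / |b|) * |f τ| := by ring
  rw [hid]
  calc |c₁ τ * Dl τ + c₂ τ * Np τ| ≤ (|c₁ τ| + |c₂ τ| / |b|) * |f τ| := hkey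
    _ ≤ ε/2 * |f τ| := mul_le_mul_of_nonneg_right (hT τ hτ).1 (abs_nonneg _)

lemma caseLemma {γ κ s : ℝ} (b lam τ₀ ε : ℝ) {Sp St Dl Ap Np : ℝ → ℝ}
    (hsol : BianchiB γ κ Sp St Dl Ap Np)
    (hconv : Tendsto (traj Sp St Dl Ap Np) atBot
      (𝓝 ((s, 1 - s^2, 0, 0, 0) : ℝ × ℝ × ℝ × ℝ × ℝ)))
    (hb : b ≠ 0) (hε : 0 < ε)
    (hsgn : ∀ τ ≤ τ₀, 0 < b * (Dl τ * Np τ))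
    (hlim : |2*((2 + s) - 1) + 6*b - lam| +
      |2*((1 - s^2) - 0) + b*(2 + 2*s) - lam*b| / |b| < ε/2) :
    ∃ τε : ℝ, ∀ τ ≤ τε,
      Real.exp ((lam+ε)*τ) ≤ |Dl τ + b * Np τ| ∧
      |Dl τ + b * Np τ| ≤ Real.exp ((lam-ε)*τ) := by
  obtain ⟨hSp, hSt, hAp, hNp⟩ := compTendsto hconv
  have hNT : Tendsto (NT κ Ap Np) atBot (𝓝 0) := NTTendsto hAp hNp
  have hq : Tendsto (qF γ κ Sp St Ap Np) atBot (𝓝 2) := qFTendsto hSp hSt hAp hNp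
  have hc1T : Tendsto (fun τ => 2*(qF γ κ Sp St Ap Np τ + Sp τ - 1) + 6*b - lam) atBot
      (𝓝 (2*((2 + s) - 1) + 6*b - lam)) :=
    ((((hq.add hSp).sub_const 1).const_mul 2).add_const (6*b)).sub_const lam
  have hc2T : Tendsto (fun τ => 2*(St τ - NT κ Ap Np τ) + b*(qF γ κ Sp St Ap Np τ + 2*Sp τ) - lam*b)
      atBot (𝓝 (2*((1 - s^2) - 0) + b*(2 + 2*s) - lam*b)) :=
    ((((hSt.sub hNT).const_mul 2).add ((hq.add (hSp.const_mul 2)).const_mul b)).sub_const (lam*b))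
  have htot := hc1T.abs.add (hc2T.abs.div_const |b|)
  have hest := (Tendsto.eventually_lt_const hlim htot).mono (fun τ h => h.le)
  exact master lam b τ₀ ε hsol hb hε hsgn hest

theorem stmt11 (γ κ s τ₀ : ℝ) (Sp St Dl Ap Np : ℝ → ℝ)
    (hsol : BianchiB γ κ Sp St Dl Ap Np)
    (hconv : Tendsto (traj Sp St Dl Ap Np) atBot
      (𝓝 ((s, 1 - s^2, 0, 0, 0) : ℝ × ℝ × ℝ × ℝ × ℝ))) :
    (s ∈ Set.Ioo (-1:ℝ) 1 → (∀ τ ≤ τ₀, 0 < Dl τ * Np τ) →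
      ∀ ε > 0, ∃ τε : ℝ, ∀ τ ≤ τε,
        Real.exp ((2 + 2*s + 2*Real.sqrt (3*(1 - s^2)) + ε)*τ) ≤
          |Dl τ + Real.sqrt ((1 - s^2)/3) * Np τ| ∧
        |Dl τ + Real.sqrt ((1 - s^2)/3) * Np τ| ≤
          Real.exp ((2 + 2*s + 2*Real.sqrt (3*(1 - s^2)) - ε)*τ)) ∧
    (s ∈ Set.Ioo (-1:ℝ) 1 → (∀ τ ≤ τ₀, Dl τ * Np τ < 0) →
      ∀ ε > 0, ∃ τε : ℝ, ∀ τ ≤ τε,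
        Real.exp ((2 + 2*s - 2*Real.sqrt (3*(1 - s^2)) + ε)*τ) ≤
          |Dl τ - Real.sqrt ((1 - s^2)/3) * Np τ| ∧
        |Dl τ - Real.sqrt ((1 - s^2)/3) * Np τ| ≤
          Real.exp ((2 + 2*s - 2*Real.sqrt (3*(1 - s^2)) - ε)*τ)) ∧
    (s = 1 →
      ((∀ τ ≤ τ₀, 0 < Dl τ * Np τ) →
        ∀ ε > 0, ∃ εh > 0, ∃ τε : ℝ, ∀ τ ≤ τε,
          Real.exp ((4 + ε)*τ) ≤ |Dl τ + εh * Np τ| ∧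
          |Dl τ + εh * Np τ| ≤ Real.exp ((4 - ε)*τ)) ∧
      ((∀ τ ≤ τ₀, Dl τ * Np τ < 0) →
        ∀ ε > 0, ∃ εh > 0, ∃ τε : ℝ, ∀ τ ≤ τε,
          Real.exp ((4 + ε)*τ) ≤ |Dl τ - εh * Np τ| ∧
          |Dl τ - εh * Np τ| ≤ Real.exp ((4 - ε)*τ))) := by
  refine ⟨?_, ?_, ?_⟩
  · -- case (a)
    intro hs hsgn ε hε
    set a : ℝ := Real.sqrt ((1 - s^2)/3) with ha_def
    have hs2 : (0:ℝ) < 1 - s^2 := by nlinarith [hs.1, hs.2]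
    have hapos : 0 < a := Real.sqrt_pos.2 (by linarith)
    have h3a : Real.sqrt (3*(1 - s^2)) = 3 * a := by
      rw [ha_def, show (3:ℝ)*(1-s^2) = 3^2 * ((1-s^2)/3) by ring,
        Real.sqrt_mul (by norm_num : (0:ℝ) ≤ 3^2),
        Real.sqrt_sq (by norm_num : (0:ℝ) ≤ 3)]
    have ha2 : a^2 = (1 - s^2)/3 := Real.sq_sqrt (by linarith)
    set lam : ℝ := 2 + 2*s + 2*Real.sqrt (3*(1 - s^2)) with hlam_def
    have e1 : 2*((2 + s) - 1) + 6*a - lam = 0 := by rw [hlam_def, h3a]; ring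
    have e2 : 2*((1 - s^2) - 0) + a*(2 + 2*s) - lam*a = 0 := by
      rw [hlam_def, h3a]; linear_combination (-6:ℝ) * ha2
    have hsgn' : ∀ τ ≤ τ₀, 0 < a * (Dl τ * Np τ) := fun τ hτ =>
      mul_pos hapos (hsgn τ hτ)
    have hlim : |2*((2 + s) - 1) + 6*a - lam| +
        |2*((1 - s^2) - 0) + a*(2 + 2*s) - lam*a| / |a| < ε/2 := by
      rw [e1, e2]; simp; positivity
    exact caseLemma a lam τ₀ ε hsol hconv (ne_of_gt hapos) hε hsgn' hlim
  · -- case (b)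
    intro hs hsgn ε hε
    set a : ℝ := Real.sqrt ((1 - s^2)/3) with ha_def
    have hs2 : (0:ℝ) < 1 - s^2 := by nlinarith [hs.1, hs.2]
    have hapos : 0 < a := Real.sqrt_pos.2 (by linarith)
    have h3a : Real.sqrt (3*(1 - s^2)) = 3 * a := by
      rw [ha_def, show (3:ℝ)*(1-s^2) = 3^2 * ((1-s^2)/3) by ring,
        Real.sqrt_mul (by norm_num : (0:ℝ) ≤ 3^2),
        Real.sqrt_sq (by norm_num : (0:ℝ) ≤ 3)]
    have ha2 : a^2 = (1 - s^2)/3 := Real.sq_sqrt (by linarith)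
    set lam : ℝ := 2 + 2*s - 2*Real.sqrt (3*(1 - s^2)) with hlam_def
    have e1 : 2*((2 + s) - 1) + 6*(-a) - lam = 0 := by rw [hlam_def, h3a]; ring
    have e2 : 2*((1 - s^2) - 0) + (-a)*(2 + 2*s) - lam*(-a) = 0 := by
      rw [hlam_def, h3a]; linear_combination (-6:ℝ) * ha2
    have hsgn' : ∀ τ ≤ τ₀, 0 < (-a) * (Dl τ * Np τ) := fun τ hτ => by
      nlinarith [hsgn τ hτ]
    have hlim : |2*((2 + s) - 1) + 6*(-a) - lam| +
        |2*((1 - s^2) - 0) + (-a)*(2 + 2*s) - lam*(-a)| / |(-a)| < ε/2 := by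
      rw [e1, e2]; simp; positivity
    obtain ⟨τε, h⟩ := caseLemma (-a) lam τ₀ ε hsol hconv (by simp [ne_of_gt hapos]) hε hsgn' hlim
    refine ⟨τε, fun τ hτ => ?_⟩
    have h2 := h τ hτ
    rw [show Dl τ + (-a) * Np τ = Dl τ - a * Np τ by ring] at h2
    exact h2
  · -- case (c)
    intro h1
    subst h1
    constructor
    · intro hsgn ε hε
      refine ⟨ε/24, by positivity, ?_⟩
      have hsgn' : ∀ τ ≤ τ₀, 0 < (ε/24) * (Dl τ * Np τ) := fun τ hτ =>
        mul_pos (by positivity) (hsgn τ hτ)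
      have e2 : 2*((1 - (1:ℝ)^2) - 0) + (ε/24)*(2 + 2*1) - 4*(ε/24) = 0 := by ring
      have e1 : 2*((2 + (1:ℝ)) - 1) + 6*(ε/24) - 4 = ε/4 := by ring
      have hlim : |2*((2 + (1:ℝ)) - 1) + 6*(ε/24) - 4| +
          |2*((1 - (1:ℝ)^2) - 0) + (ε/24)*(2 + 2*1) - 4*(ε/24)| / |ε/24| < ε/2 := by
        rw [e1, e2, abs_of_pos (by positivity : (0:ℝ) < ε/4)]
        simp
        linarith
      exact caseLemma (ε/24) 4 τ₀ ε hsol hconv (by positivity) hε hsgn' hlim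
    · intro hsgn ε hε
      refine ⟨ε/24, by positivity, ?_⟩
      have hsgn' : ∀ τ ≤ τ₀, 0 < (-(ε/24)) * (Dl τ * Np τ) := fun τ hτ => by
        nlinarith [hsgn τ hτ]
      have e2 : 2*((1 - (1:ℝ)^2) - 0) + (-(ε/24))*(2 + 2*1) - 4*(-(ε/24)) = 0 := by ring
      have e1 : 2*((2 + (1:ℝ)) - 1) + 6*(-(ε/24)) - 4 = -(ε/4) := by ring
      have hlim : |2*((2 + (1:ℝ)) - 1) + 6*(-(ε/24)) - 4| +
          |2*((1 - (1:ℝ)^2) - 0) + (-(ε/24))*(2 + 2*1) - 4*(-(ε/24))| / |(-(ε/24))| < ε/2 := by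
        rw [e1, e2, abs_neg, abs_of_pos (by positivity : (0:ℝ) < ε/4)]
        simp
        linarith
      obtain ⟨τε, h⟩ := caseLemma (-(ε/24)) 4 τ₀ ε hsol hconv (neg_ne_zero.2 (by positivity)) hε hsgn' hlim
      refine ⟨τε, fun τ hτ => ?_⟩
      have h2 := h τ hτ
      rw [show Dl τ + (-(ε/24)) * Np τ = Dl τ - (ε/24) * Np τ by ring] at h2
      exact h2
end
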